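/- Let T be a binary tree structure whose root is an internal node with left subtree structure T_l and right subtree structure T_r, and let c ≥ 1 and m > L_T. Then the c-partitioning function of T on ℝ^ℓ satisfies π^c_T(m) ≤ (1/2)^{δ} · Σ_{k=L_{T_l}}^{m−L_{T_r}} min{2ℓ, C(m,k)} · Σ_{1 ≤ a,b ≤ c, a+b ≥ c} C(a, c−b) · C(b, c−a) · (a+b−c)! · π^a_{T_l}(k) · π^b_{T_r}(m−k), where δ = 1 if the tree structures T_l and T_r are equal and δ = 0 otherwise, and C denotes the binomial coefficient. -/

import Mathlib

/-- A `c`-partition of a finite set `S`: a set of `c` pairwise disjoint nonempty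
subsets (parts) whose union is `S`. -/
def IsPartition {α : Type*} (S : Finset α) (c : ℕ) (P : Finset (Finset α)) : Prop :=
  P.card = c ∧ (∀ p ∈ P, p.Nonempty) ∧
    (∀ p ∈ P, ∀ q ∈ P, p ≠ q → Disjoint p q) ∧ (∀ x, x ∈ S ↔ ∃ p ∈ P, x ∈ p)

/-- A binary tree structure: either a leaf, or an internal node with a left and a
right subtree structure. -/
inductive TreeStruct : Type where
  | leaf : TreeStruct
  | node : TreeStruct → TreeStruct → TreeStruct
deriving DecidableEq

namespace TreeStruct

/-- The number of leaves of a binary tree structure. -/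
def leaves : TreeStruct → ℕ
  | leaf => 1
  | node l r => l.leaves + r.leaves

/-- The number of internal nodes of a binary tree structure. -/
def internals : TreeStruct → ℕ
  | leaf => 0
  | node l r => l.internals + r.internals + 1

end TreeStruct

/-- A decision tree on `ℝ^ℓ` with labels in `Y`: every leaf carries a label and every
internal node carries a decision rule `(i, θ, s)` with feature `i`, threshold `θ` and
sign `s` (`true` codes `+1`, `false` codes `-1`). -/
inductive DTree (ℓ : ℕ) (Y : Type) : Type where
  | leaf : Y → DTree ℓ Y
  | node : Fin ℓ → ℝ → Bool → DTree ℓ Y → DTree ℓ Y → DTree ℓ Y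

namespace DTree

/-- The output of a decision tree on an example `x`: at a node with rule `(i, θ, s)`,
`x` is sent to the left subtree if `sign (x^i - θ) = s` (i.e. `(θ < x^i) = s`) and to
the right subtree otherwise. -/
noncomputable def eval {ℓ : ℕ} {Y : Type} : DTree ℓ Y → (Fin ℓ → ℝ) → Y
  | leaf y, _ => y
  | node i θ s l r, x => if decide (θ < x i) = s then l.eval x else r.eval x

/-- The underlying structure of a decision tree. -/
def shape {ℓ : ℕ} {Y : Type} : DTree ℓ Y → TreeStruct
  | leaf _ => .leaf
  | node _ _ _ l r => .node l.shape r.shape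

end DTree

/-- A partition `P` of a sample `S ⊆ ℝ^ℓ` is realizable by the class of decision trees
with structure `T` if there is a decision tree `t` with structure `T` (labels in `ℕ`)
such that two points of `S` lie in the same part of `P` iff `t` outputs the same label
on them. -/
def TreeRealizable (ℓ : ℕ) (T : TreeStruct) (S : Finset (Fin ℓ → ℝ))
    (P : Finset (Finset (Fin ℓ → ℝ))) : Prop :=
  ∃ t : DTree ℓ ℕ, t.shape = T ∧
    ∀ x ∈ S, ∀ y ∈ S, ((∃ p ∈ P, x ∈ p ∧ y ∈ p) ↔ t.eval x = t.eval y)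

/-- `PartSet ℓ T a S` : the set of `a`-partitions of `S` realizable by the tree class `T`. -/
def PartSet (ℓ : ℕ) (T : TreeStruct) (a : ℕ) (S : Finset (Fin ℓ → ℝ)) :
    Set (Finset (Finset (Fin ℓ → ℝ))) :=
  {P | IsPartition S a P ∧ TreeRealizable ℓ T S P}

/-- The `a`-partitioning function of the tree class `T` on `ℝ^ℓ`: the largest number of
distinct `a`-partitions realizable by `T` on a sample of `m` points. -/
noncomputable def treePi (ℓ : ℕ) (T : TreeStruct) (a m : ℕ) : ℕ :=
  sSup {n : ℕ | ∃ S : Finset (Fin ℓ → ℝ), S.card = m ∧ n = (PartSet ℓ T a S).ncard}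


/-! ### Auxiliary development -/

open Finset
open scoped Classical
set_option linter.unusedSectionVars false
set_option linter.unusedVariables false
set_option maxHeartbeats 1000000

namespace TreeAux

variable {ℓ : ℕ}

abbrev V (ℓ : ℕ) := Fin ℓ → ℝ

/-- A tree of a given shape with all labels equal to `y`. -/
noncomputable def constTree (hℓ : 1 ≤ ℓ) (y : ℕ) : TreeStruct → DTree ℓ ℕ
  | .leaf => .leaf y
  | .node l r => .node ⟨0, hℓ⟩ 0 true (constTree hℓ y l) (constTree hℓ y r)

@[simp] lemma constTree_shape (hℓ : 1 ≤ ℓ) (y : ℕ) (T : TreeStruct) :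
    (constTree hℓ y T).shape = T := by
  induction T with
  | leaf => rfl
  | node l r ihl ihr => simp [constTree, DTree.shape, ihl, ihr]

@[simp] lemma constTree_eval (hℓ : 1 ≤ ℓ) (y : ℕ) (T : TreeStruct) (x : V ℓ) :
    (constTree hℓ y T).eval x = y := by
  induction T with
  | leaf => rfl
  | node l r ihl ihr =>
      simp only [constTree, DTree.eval]
      split <;> simp [ihl, ihr]

section PartitionLemmas

variable {α : Type*} [DecidableEq α]

lemma part_unique {S : Finset α} {c : ℕ} {P : Finset (Finset α)}
    (hP : IsPartition S c P) {p q : Finset α} (hp : p ∈ P) (hq : q ∈ P)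
    {x : α} (hxp : x ∈ p) (hxq : x ∈ q) : p = q := by
  by_contra hne
  exact (hP.2.2.1 p hp q hq hne).forall_ne_finset hxp hxq rfl

lemma part_subset {S : Finset α} {c : ℕ} {P : Finset (Finset α)}
    (hP : IsPartition S c P) {p : Finset α} (hp : p ∈ P) : p ⊆ S := by
  intro x hx
  exact (hP.2.2.2 x).2 ⟨p, hp, hx⟩

/-- Restriction of a partition to a subset. -/
noncomputable def restrict (P : Finset (Finset α)) (A : Finset α) : Finset (Finset α) :=
  (P.image (· ∩ A)).filter (·.Nonempty)

lemma mem_restrict {P : Finset (Finset α)} {A q : Finset α} :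
    q ∈ restrict P A ↔ (∃ p ∈ P, p ∩ A = q) ∧ q.Nonempty := by
  simp [restrict, and_comm]

lemma restrict_same_part {S : Finset α} {c : ℕ} {P : Finset (Finset α)}
    (hP : IsPartition S c P) {A : Finset α} {x y : α} (hx : x ∈ A) (hy : y ∈ A) :
    (∃ q ∈ restrict P A, x ∈ q ∧ y ∈ q) ↔ (∃ p ∈ P, x ∈ p ∧ y ∈ p) := by
  constructor
  · rintro ⟨q, hq, hxq, hyq⟩
    rcases (mem_restrict.1 hq).1 with ⟨p, hp, rfl⟩
    exact ⟨p, hp, (mem_inter.1 hxq).1, (mem_inter.1 hyq).1⟩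
  · rintro ⟨p, hp, hxp, hyp⟩
    refine ⟨p ∩ A, mem_restrict.2 ⟨⟨p, hp, rfl⟩, ⟨x, mem_inter.2 ⟨hxp, hx⟩⟩⟩,
      mem_inter.2 ⟨hxp, hx⟩, mem_inter.2 ⟨hyp, hy⟩⟩

lemma isPartition_restrict {S : Finset α} {c : ℕ} {P : Finset (Finset α)}
    (hP : IsPartition S c P) {A : Finset α} (hA : A ⊆ S) :
    IsPartition A (restrict P A).card (restrict P A) := by
  refine ⟨rfl, ?_, ?_, ?_⟩
  · intro q hq; exact (mem_restrict.1 hq).2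
  · intro q hq r hr hne
    rcases (mem_restrict.1 hq).1 with ⟨p, hp, rfl⟩
    rcases (mem_restrict.1 hr).1 with ⟨p', hp', rfl⟩
    have hpp' : p ≠ p' := by rintro rfl; exact hne rfl
    exact Finset.disjoint_left.2 fun x hx hx' =>
      (Finset.disjoint_left.1 (hP.2.2.1 p hp p' hp' hpp'))
        (mem_inter.1 hx).1 (mem_inter.1 hx').1
  · intro x
    constructor
    · intro hx
      rcases (hP.2.2.2 x).1 (hA hx) with ⟨p, hp, hxp⟩
      exact ⟨p ∩ A, mem_restrict.2 ⟨⟨p, hp, rfl⟩, ⟨x, mem_inter.2 ⟨hxp, hx⟩⟩⟩,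
        mem_inter.2 ⟨hxp, hx⟩⟩
    · rintro ⟨q, hq, hxq⟩
      rcases (mem_restrict.1 hq).1 with ⟨p, hp, rfl⟩
      exact (mem_inter.1 hxq).2

lemma restrict_inter_inj {S : Finset α} {c : ℕ} {P : Finset (Finset α)}
    (hP : IsPartition S c P) {A : Finset α} {p p' : Finset α} (hp : p ∈ P) (hp' : p' ∈ P)
    (h : p ∩ A = p' ∩ A) (hne : (p ∩ A).Nonempty) : p = p' := by
  rcases hne with ⟨x, hx⟩
  have hx' : x ∈ p' ∩ A := h ▸ hx
  exact part_unique hP hp hp' (mem_inter.1 hx).1 (mem_inter.1 hx').1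

lemma card_restrict_le {P : Finset (Finset α)} {A : Finset α} :
    (restrict P A).card ≤ P.card :=
  le_trans (Finset.card_filter_le _ _) (Finset.card_image_le)

lemma card_restrict_pos {S : Finset α} {c : ℕ} {P : Finset (Finset α)}
    (hP : IsPartition S c P) {A : Finset α} (hA : A ⊆ S) (hAne : A.Nonempty) :
    1 ≤ (restrict P A).card := by
  rcases hAne with ⟨x, hx⟩
  rcases ((isPartition_restrict hP hA).2.2.2 x).1 hx with ⟨q, hq, _⟩
  exact Finset.card_pos.2 ⟨q, hq⟩

end PartitionLemmas

section Tops

variable {α : Type*} [DecidableEq α]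




/-- a maximal element of a nonempty finset w.r.t. a real key -/
noncomputable def maxElt (key : α → ℝ) (D : Finset α) (h : D.Nonempty) : α :=
  (Finset.exists_max_image D key h).choose

lemma maxElt_mem (key : α → ℝ) (D : Finset α) (h : D.Nonempty) : maxElt key D h ∈ D :=
  (Finset.exists_max_image D key h).choose_spec.1

lemma maxElt_max (key : α → ℝ) (D : Finset α) (h : D.Nonempty) :
    ∀ y ∈ D, key y ≤ key (maxElt key D h) :=
  (Finset.exists_max_image D key h).choose_spec.2

/-- greedy top-k elements of `D` w.r.t. `key` -/
noncomputable def tops (key : α → ℝ) : ℕ → Finset α → Finset α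
  | 0, _ => ∅
  | (k+1), D =>
      if h : D.Nonempty then
        insert (maxElt key D h) (tops key k (D.erase (maxElt key D h)))
      else ∅

lemma tops_subset (key : α → ℝ) (k : ℕ) (D : Finset α) : tops key k D ⊆ D := by
  induction k generalizing D with
  | zero => simp [tops]
  | succ k ih =>
      rw [tops]
      split
      · next h =>
          intro x hx
          rcases Finset.mem_insert.1 hx with rfl | hx
          · exact maxElt_mem key D h
          · exact Finset.erase_subset _ _ (ih _ hx)
      · simp

lemma tops_card (key : α → ℝ) (k : ℕ) (D : Finset α) :
    (tops key k D).card = min k D.card := by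
  induction k generalizing D with
  | zero => simp [tops]
  | succ k ih =>
      rw [tops]
      split
      · next h =>
          have hnm : maxElt key D h ∉ tops key k (D.erase (maxElt key D h)) := by
            intro hmem
            exact (Finset.notMem_erase _ _) (tops_subset key k _ hmem)
          rw [Finset.card_insert_of_notMem hnm, ih,
            Finset.card_erase_of_mem (maxElt_mem key D h)]
          have hD : 1 ≤ D.card := Finset.card_pos.2 h
          omega
      · next h =>
          have : D = ∅ := Finset.not_nonempty_iff_eq_empty.1 h
          simp [this]

lemma tops_mono (key : α → ℝ) {k k' : ℕ} (h : k ≤ k') (D : Finset α) :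
    tops key k D ⊆ tops key k' D := by
  induction k' generalizing k D with
  | zero => interval_cases k; simp
  | succ k' ih =>
      rcases Nat.eq_or_lt_of_le h with rfl | hlt
      · exact Finset.Subset.refl _
      · have hk : k ≤ k' := by omega
        rcases Nat.eq_zero_or_pos k with rfl | hkpos
        · simp [tops]
        · -- k ≥ 1 so D nonempty in relevant case
          cases k with
          | zero => simp [tops]
          | succ k0 =>
            rw [tops, tops]
            split
            · next hD =>
                exact Finset.insert_subset_insert _ (ih (by omega) _)
            · exact fun x hx => by simp at hx

/-- `B` is a strict upper subset of `D` w.r.t. `key` -/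
def UpperOn (key : α → ℝ) (D B : Finset α) : Prop :=
  B ⊆ D ∧ ∀ x ∈ B, ∀ y ∈ D, y ∉ B → key y < key x

lemma upper_eq_tops_aux (key : α → ℝ) (n : ℕ) :
    ∀ (D B : Finset α), UpperOn key D B → B.card = n → B = tops key n D := by
  induction n with
  | zero =>
      intro D B h hB
      simp [Finset.card_eq_zero.1 hB, tops]
  | succ k ih =>
      intro D B h hB
      obtain ⟨hBD, hup⟩ := h
      have hBne : B.Nonempty := Finset.card_pos.1 (by omega)
      have hDne : D.Nonempty := hBne.mono hBD
      have hmax := maxElt_mem key D hDne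
      have hmB : maxElt key D hDne ∈ B := by
        by_contra hmB
        rcases hBne with ⟨x, hx⟩
        exact absurd (maxElt_max key D hDne x (hBD hx))
          (not_le.2 (hup x hx _ hmax hmB))
      rw [tops]
      rw [dif_pos hDne]
      set a := maxElt key D hDne
      have hBa : B = insert a (B.erase a) := (Finset.insert_erase hmB).symm
      have h1 : UpperOn key (D.erase a) (B.erase a) := by
        refine ⟨Finset.erase_subset_erase _ hBD, ?_⟩
        intro x hx y hy hyB
        refine hup x (Finset.mem_of_mem_erase hx) y (Finset.mem_of_mem_erase hy) ?_
        intro hyB'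
        rcases Finset.mem_erase.1 hy with ⟨hya, _⟩
        exact hyB (Finset.mem_erase.2 ⟨hya, hyB'⟩)
      have h2 : (B.erase a).card = k := by
        rw [Finset.card_erase_of_mem hmB, hB]
        omega
      rw [← ih _ _ h1 h2, ← hBa]

lemma upper_eq_tops (key : α → ℝ) {D B : Finset α} (h : UpperOn key D B) :
    B = tops key B.card D :=
  upper_eq_tops_aux key B.card D B h rfl

lemma tops_upper (key : α → ℝ) (hinj : ∀ x ∈ D, ∀ y ∈ D, x ≠ y → key x ≠ key y)
    (k : ℕ) : UpperOn key D (tops key k D) := by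
  induction k generalizing D with
  | zero => exact ⟨by simp [tops], by simp [tops]⟩
  | succ k ih =>
      constructor
      · exact tops_subset key _ D
      · intro x hx y hy hyB
        rw [tops] at hx hyB
        rcases Finset.eq_empty_or_nonempty D with rfl | hD
        · simp at hy
        rw [dif_pos hD] at hx hyB
        set a := maxElt key D hD with ha
        rcases Finset.mem_insert.1 hx with rfl | hx'
        · -- x is the max
          have hya : y ≠ a := by
            intro h
            exact hyB (by rw [h]; exact Finset.mem_insert_self _ _)
          exact lt_of_le_of_ne (maxElt_max key D hD y hy) (hinj y hy a (maxElt_mem key D hD) hya)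
        · have hxa : x ≠ a := by
            intro h
            rw [h] at hx'
            exact (Finset.notMem_erase a D) (tops_subset key k _ hx')
          have hxE : x ∈ D.erase a := tops_subset key k _ hx'
          have hyE : y ∈ D.erase a := by
            refine Finset.mem_erase.2 ⟨?_, hy⟩
            intro h
            exact hyB (by rw [h]; exact Finset.mem_insert_self _ _)
          have hinj' : ∀ x ∈ D.erase a, ∀ y ∈ D.erase a, x ≠ y → key x ≠ key y :=
            fun x hx y hy => hinj x (Finset.mem_of_mem_erase hx) y (Finset.mem_of_mem_erase hy)
          exact (ih (D := D.erase a) hinj').2 x hx' y hyE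
            (fun h => hyB (Finset.mem_insert_of_mem h))

variable {D : Finset α}

/-- complement of tops is tops for the negated key (given injective keys) -/
lemma sdiff_tops (key : α → ℝ) (hinj : ∀ x ∈ D, ∀ y ∈ D, x ≠ y → key x ≠ key y)
    {k : ℕ} (hk : k ≤ D.card) :
    D \ tops key k D = tops (fun x => -key x) (D.card - k) D := by
  have hup : UpperOn (fun x => -key x) D (D \ tops key k D) := by
    refine ⟨Finset.sdiff_subset, ?_⟩
    intro x hx y hy hyB
    rcases Finset.mem_sdiff.1 hx with ⟨hxD, hxT⟩
    have hyT : y ∈ tops key k D := by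
      by_contra hyT
      exact hyB (Finset.mem_sdiff.2 ⟨hy, hyT⟩)
    have := (tops_upper key hinj k).2 y hyT x hxD hxT
    simpa using this
  have hcard : (D \ tops key k D).card = D.card - k := by
    rw [Finset.card_sdiff_of_subset (tops_subset key k D), tops_card]
    omega
  rw [upper_eq_tops _ hup, hcard]


end Tops

section Shatter

variable {ℓ : ℕ}

/-- Any partition of a sample whose feature-`i0` values are pairwise distinct is
realizable (with prescribed labels) by any structure with at least as many leaves. -/
lemma shatter (hℓ : 1 ≤ ℓ) (i0 : Fin ℓ) (T1 : TreeStruct) :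
    ∀ (D : Finset (V ℓ)) (q : ℕ) (Q : Finset (Finset (V ℓ))) (lab : Finset (V ℓ) → ℕ),
    (∀ x ∈ D, ∀ y ∈ D, x ≠ y → x i0 ≠ y i0) →
    IsPartition D q Q → D.card ≤ T1.leaves →
    ∃ t : DTree ℓ ℕ, t.shape = T1 ∧ ∀ x ∈ D, ∀ p ∈ Q, x ∈ p → t.eval x = lab p := by
  induction T1 with
  | leaf =>
      intro D q Q lab hdist hQ hcard
      refine ⟨DTree.leaf (lab D), rfl, ?_⟩
      intro x hx p hp hxp
      have hpD : p ⊆ D := part_subset hQ hp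
      have hDp : D ⊆ p := by
        intro y hy
        have : y = x := by
          by_contra hne
          have := Finset.one_lt_card.2 ⟨y, hy, x, hx, hne⟩
          simp [TreeStruct.leaves] at hcard
          omega
        exact this ▸ hxp
      rw [DTree.eval, Finset.Subset.antisymm hpD hDp]
  | node l r ihl ihr =>
      intro D q Q lab hdist hQ hcard
      have hleaves : (TreeStruct.node l r).leaves = l.leaves + r.leaves := rfl
      by_cases hd : D.card ≤ l.leaves
      · -- route everything to the left subtree
        obtain ⟨tA, htAs, htAe⟩ := ihl D q Q lab hdist hQ hd
        rcases Finset.eq_empty_or_nonempty D with rfl | hD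
        · refine ⟨DTree.node i0 0 true tA (constTree hℓ 0 r), ?_, ?_⟩
          · simp [DTree.shape, htAs]
          · intro x hx; simp at hx
        · set θ : ℝ := (D.image (· i0)).min' (hD.image _) - 1 with hθ
          refine ⟨DTree.node i0 θ true tA (constTree hℓ 0 r), ?_, ?_⟩
          · simp [DTree.shape, htAs]
          · intro x hx p hp hxp
            have hlt : θ < x i0 := by
              have : (D.image (· i0)).min' (hD.image _) ≤ x i0 :=
                Finset.min'_le _ _ (Finset.mem_image_of_mem _ hx)
              rw [hθ]; linarith
            rw [DTree.eval]
            simp only [decide_eq_true_eq] at *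
            rw [if_pos (by simpa using hlt)]
            exact htAe x hx p hp hxp
      · -- split off the top `l.leaves` points along feature i0
        push_neg at hd
        set key : V ℓ → ℝ := fun x => x i0 with hkey
        set A : Finset (V ℓ) := tops key l.leaves D with hA
        have hAD : A ⊆ D := tops_subset key _ D
        have hcardA : A.card = l.leaves := by
          rw [hA, tops_card]; omega
        set B : Finset (V ℓ) := D \ A with hB
        have hcardB : B.card = D.card - l.leaves := by
          rw [hB, Finset.card_sdiff_of_subset hAD, hcardA]
        have hBne : B.Nonempty := by
          rw [← Finset.card_pos, hcardB]; omega
        have hBD : B ⊆ D := Finset.sdiff_subset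
        have hinj : ∀ x ∈ D, ∀ y ∈ D, x ≠ y → key x ≠ key y := hdist
        set θ : ℝ := (B.image (· i0)).max' (hBne.image _) with hθ
        have hsep : ∀ x ∈ D, (x ∈ A ↔ θ < x i0) := by
          intro x hxD
          constructor
          · intro hxA
            obtain ⟨y, hyB, hyθ⟩ := Finset.mem_image.1 ((B.image (· i0)).max'_mem (hBne.image _))
            have hyA : y ∉ A := (Finset.mem_sdiff.1 hyB).2
            have := (tops_upper key hinj l.leaves).2 x hxA y (hBD hyB) hyA
            rw [hθ, ← hyθ]; exact this
          · intro hxθ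
            by_contra hxA
            have hxB : x ∈ B := Finset.mem_sdiff.2 ⟨hxD, hxA⟩
            have : x i0 ≤ θ := Finset.le_max' (B.image (· i0)) (x i0) (Finset.mem_image_of_mem _ hxB)
            linarith
        -- partitions restricted to the two sides, with coherent labels
        set labA : Finset (V ℓ) → ℕ := fun s =>
          if h : ∃ p, p ∈ Q ∧ p ∩ A = s ∧ s.Nonempty then lab h.choose else 0 with hlabA
        set labB : Finset (V ℓ) → ℕ := fun s =>
          if h : ∃ p, p ∈ Q ∧ p ∩ B = s ∧ s.Nonempty then lab h.choose else 0 with hlabB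
        have hdistA : ∀ x ∈ A, ∀ y ∈ A, x ≠ y → x i0 ≠ y i0 :=
          fun x hx y hy => hdist x (hAD hx) y (hAD hy)
        have hdistB : ∀ x ∈ B, ∀ y ∈ B, x ≠ y → x i0 ≠ y i0 :=
          fun x hx y hy => hdist x (hBD hx) y (hBD hy)
        obtain ⟨tA, htAs, htAe⟩ := ihl A _ (restrict Q A) labA hdistA
          (isPartition_restrict hQ hAD) (by omega)
        obtain ⟨tB, htBs, htBe⟩ := ihr B _ (restrict Q B) labB hdistB
          (isPartition_restrict hQ hBD) (by rw [hcardB]; omega)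
        refine ⟨DTree.node i0 θ true tA tB, by simp [DTree.shape, htAs, htBs], ?_⟩
        intro x hxD p hp hxp
        by_cases hxA : x ∈ A
        · have hlt : θ < x i0 := (hsep x hxD).1 hxA
          rw [DTree.eval, if_pos (by simpa using hlt)]
          have hmem : p ∩ A ∈ restrict Q A :=
            mem_restrict.2 ⟨⟨p, hp, rfl⟩, ⟨x, Finset.mem_inter.2 ⟨hxp, hxA⟩⟩⟩
          rw [htAe x hxA (p ∩ A) hmem (Finset.mem_inter.2 ⟨hxp, hxA⟩), hlabA]
          have hex : ∃ p', p' ∈ Q ∧ p' ∩ A = p ∩ A ∧ (p ∩ A).Nonempty :=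
            ⟨p, hp, rfl, ⟨x, Finset.mem_inter.2 ⟨hxp, hxA⟩⟩⟩
          show (if h : ∃ p' ∈ Q, p' ∩ A = p ∩ A ∧ (p ∩ A).Nonempty then lab h.choose else 0)
            = lab p
          rw [dif_pos hex]
          obtain ⟨hp', heq, hne⟩ := hex.choose_spec
          rw [restrict_inter_inj hQ hp' hp heq (by rw [heq]; exact hne)]
        · have hxB : x ∈ B := Finset.mem_sdiff.2 ⟨hxD, hxA⟩
          have hnlt : ¬ θ < x i0 := fun h => hxA ((hsep x hxD).2 h)
          rw [DTree.eval, if_neg (by simpa using hnlt)]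
          have hmem : p ∩ B ∈ restrict Q B :=
            mem_restrict.2 ⟨⟨p, hp, rfl⟩, ⟨x, Finset.mem_inter.2 ⟨hxp, hxB⟩⟩⟩
          rw [htBe x hxB (p ∩ B) hmem (Finset.mem_inter.2 ⟨hxp, hxB⟩), hlabB]
          have hex : ∃ p', p' ∈ Q ∧ p' ∩ B = p ∩ B ∧ (p ∩ B).Nonempty :=
            ⟨p, hp, rfl, ⟨x, Finset.mem_inter.2 ⟨hxp, hxB⟩⟩⟩
          show (if h : ∃ p' ∈ Q, p' ∩ B = p ∩ B ∧ (p ∩ B).Nonempty then lab h.choose else 0)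
            = lab p
          rw [dif_pos hex]
          obtain ⟨hp', heq, hne⟩ := hex.choose_spec
          rw [restrict_inter_inj hQ hp' hp heq (by rw [heq]; exact hne)]

end Shatter


section Realize

variable {ℓ : ℕ}

/-- shatter, packaged as realizability -/
lemma shatter_realizable (hℓ : 1 ≤ ℓ) (i0 : Fin ℓ) (T1 : TreeStruct)
    (D : Finset (V ℓ)) (q : ℕ) (Q : Finset (Finset (V ℓ)))
    (hdist : ∀ x ∈ D, ∀ y ∈ D, x ≠ y → x i0 ≠ y i0)
    (hQ : IsPartition D q Q) (hcard : D.card ≤ T1.leaves) :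
    TreeRealizable ℓ T1 D Q := by
  obtain ⟨t, hts, hte⟩ := shatter hℓ i0 T1 D q Q (fun s => Q.toList.idxOf s) hdist hQ hcard
  refine ⟨t, hts, ?_⟩
  intro x hx y hy
  constructor
  · rintro ⟨p, hp, hxp, hyp⟩
    rw [hte x hx p hp hxp, hte y hy p hp hyp]
  · intro hev
    rcases (hQ.2.2.2 x).1 hx with ⟨px, hpx, hxpx⟩
    rcases (hQ.2.2.2 y).1 hy with ⟨py, hpy, hypy⟩
    rw [hte x hx px hpx hxpx, hte y hy py hpy hypy] at hev
    have : px = py := by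
      have := (List.idxOf_inj (Finset.mem_toList.2 hpx) (y := py)).1 hev
      exact this
    exact ⟨px, hpx, hxpx, this ▸ hypy⟩

lemma partset_subset {T : TreeStruct} {a : ℕ} {S : Finset (V ℓ)} :
    PartSet ℓ T a S ⊆ ↑(S.powerset.powerset) := by
  intro P hP
  simp only [Set.mem_setOf_eq, PartSet] at hP
  simp only [Finset.coe_powerset, Set.mem_preimage, Set.mem_powerset_iff]
  intro p hp
  simp only [Finset.coe_powerset, Set.mem_preimage, Set.mem_powerset_iff]
  exact fun x hx => part_subset hP.1 (by exact_mod_cast hp) hx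

lemma partset_finite {T : TreeStruct} {a : ℕ} {S : Finset (V ℓ)} :
    (PartSet ℓ T a S).Finite :=
  Set.Finite.subset (S.powerset.powerset.finite_toSet) partset_subset

lemma partset_ncard_le {T : TreeStruct} {a : ℕ} {S : Finset (V ℓ)} :
    (PartSet ℓ T a S).ncard ≤ 2 ^ 2 ^ S.card := by
  have h := Set.ncard_le_ncard (partset_subset (T := T) (a := a) (S := S))
    (S.powerset.powerset.finite_toSet)
  rwa [Set.ncard_coe_finset, Finset.card_powerset, Finset.card_powerset] at h

lemma treePi_bddAbove (T : TreeStruct) (a m : ℕ) :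
    BddAbove {n : ℕ | ∃ S : Finset (V ℓ), S.card = m ∧ n = (PartSet ℓ T a S).ncard} := by
  refine ⟨2 ^ 2 ^ m, ?_⟩
  rintro n ⟨S, hS, rfl⟩
  exact hS ▸ partset_ncard_le

lemma ncard_le_treePi {T : TreeStruct} {a : ℕ} {S : Finset (V ℓ)} {k : ℕ} (hk : S.card = k) :
    (PartSet ℓ T a S).ncard ≤ treePi ℓ T a k :=
  le_csSup (treePi_bddAbove T a k) ⟨S, hk, rfl⟩

end Realize

section Perturb

variable {ℓ : ℕ}

/-- Every sample can be perturbed into a fully generic sample (all features pairwise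
distinct) realizing at least as many partitions. -/
lemma exists_generic (hℓ : 1 ≤ ℓ) (T : TreeStruct) (c : ℕ) (S : Finset (V ℓ)) :
    ∃ S' : Finset (V ℓ), S'.card = S.card ∧
      (∀ x ∈ S', ∀ y ∈ S', x ≠ y → ∀ i, x i ≠ y i) ∧
      (PartSet ℓ T c S).ncard ≤ (PartSet ℓ T c S').ncard := by
  rcases Finset.eq_empty_or_nonempty S with rfl | hSne
  · exact ⟨∅, rfl, by simp, le_refl _⟩
  -- the minimal positive feature gap
  set gaps : Finset ℝ :=
    (((S ×ˢ S) ×ˢ (Finset.univ : Finset (Fin ℓ))).image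
      (fun w => |w.1.1 w.2 - w.1.2 w.2|)).filter (0 < ·) with hgaps
  set γ : ℝ := if h : gaps.Nonempty then min (gaps.min' h / 2) (1/2) else (1/2) with hγ
  have hγpos : 0 < γ := by
    rw [hγ]
    split
    · next h =>
        refine lt_min ?_ (by norm_num)
        have hmm := Finset.min'_mem gaps h
        have := (Finset.mem_filter.1 hmm).2
        linarith
    · norm_num
  have hγhalf : γ ≤ 1/2 := by
    rw [hγ]; split
    · exact min_le_right _ _
    · exact le_refl _
  have hγgap : ∀ x ∈ S, ∀ y ∈ S, ∀ i : Fin ℓ, x i ≠ y i → 2 * γ ≤ |x i - y i| := by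
    intro x hx y hy i hne
    have hmem : |x i - y i| ∈ gaps := by
      rw [hgaps]
      refine Finset.mem_filter.2 ⟨?_, by simp [sub_eq_zero, hne]⟩
      exact Finset.mem_image.2 ⟨((x, y), i), by simp [hx, hy], rfl⟩
    have hne' : gaps.Nonempty := ⟨_, hmem⟩
    have h1 : gaps.min' hne' ≤ |x i - y i| := Finset.min'_le _ _ hmem
    have h2 : γ ≤ gaps.min' hne' / 2 := by
      rw [hγ, dif_pos hne']; exact min_le_left _ _
    linarith
  -- choose the perturbations
  have hη : ∀ F : Finset (V ℓ), ∃ η : V ℓ → ℝ,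
      (∀ x ∈ F, η x ∈ Set.Ioo (0:ℝ) γ) ∧
      (∀ x ∈ F, ∀ y ∈ F, x ≠ y → ∀ i, x i + η x ≠ y i + η y) := by
    intro F
    induction F using Finset.induction_on with
    | empty => exact ⟨fun _ => γ/2, by simp, by simp⟩
    | @insert a F ha ih =>
        obtain ⟨η, hη1, hη2⟩ := ih
        set Bad : Finset ℝ := F.biUnion
          (fun y => (Finset.univ : Finset (Fin ℓ)).image (fun i => (y i + η y) - a i)) with hBad
        have hIoo : (Set.Ioo (0:ℝ) γ).Infinite := Set.Ioo_infinite hγpos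
        obtain ⟨r, hrIoo, hrBad⟩ := hIoo.exists_notMem_finset Bad
        have upd : ∀ z ∈ F, Function.update η a r z = η z := by
          intro z hz
          refine Function.update_of_ne ?_ _ _
          intro h
          rw [h] at hz
          exact ha hz
        refine ⟨Function.update η a r, ?_, ?_⟩
        · intro x hx
          rcases Finset.mem_insert.1 hx with hxa | hxF
          · subst hxa; simpa using hrIoo
          · rw [upd x hxF]; exact hη1 x hxF
        · intro x hx y hy hne i
          rcases Finset.mem_insert.1 hx with hxa | hxF <;>
            rcases Finset.mem_insert.1 hy with hya | hyF
          · exact absurd (hxa.trans hya.symm) hne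
          · subst hxa
            rw [Function.update_self, upd y hyF]
            intro h
            apply hrBad
            refine Finset.mem_biUnion.2 ⟨y, hyF, Finset.mem_image.2 ⟨i, Finset.mem_univ _, ?_⟩⟩
            linarith
          · subst hya
            rw [Function.update_self, upd x hxF]
            intro h
            apply hrBad
            refine Finset.mem_biUnion.2 ⟨x, hxF, Finset.mem_image.2 ⟨i, Finset.mem_univ _, ?_⟩⟩
            linarith
          · rw [upd x hxF, upd y hyF]
            exact hη2 x hxF y hyF hne i
  obtain ⟨η, hη1, hη2⟩ := hη S
  set g : V ℓ → V ℓ := fun x => fun i => x i + η x with hg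
  have hginj : Set.InjOn g ↑S := by
    intro x hx y hy hxy
    by_contra hne
    exact hη2 x hx y hy hne ⟨0, hℓ⟩ (congrFun hxy _)
  set S' := S.image g with hS'
  have hcard' : S'.card = S.card := Finset.card_image_of_injOn hginj
  have hgen : ∀ x ∈ S', ∀ y ∈ S', x ≠ y → ∀ i, x i ≠ y i := by
    intro x' hx' y' hy' hne i
    rcases Finset.mem_image.1 hx' with ⟨x, hx, rfl⟩
    rcases Finset.mem_image.1 hy' with ⟨y, hy, rfl⟩
    have hxy : x ≠ y := by rintro rfl; exact hne rfl
    exact hη2 x hx y hy hxy i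
  have hvals : ∀ i : Fin ℓ, ((S.image (fun x => x i))).Nonempty := fun i => hSne.image _
  set round : Fin ℓ → ℝ → ℝ := fun i θ =>
    (if h : ((S.image (fun x => x i)).filter (· ≤ θ)).Nonempty
      then ((S.image (fun x => x i)).filter (· ≤ θ)).max' h
      else (S.image (fun x => x i)).min' (hvals i) - 1) + γ with hround
  have hkey : ∀ (i : Fin ℓ) (θ : ℝ), ∀ x ∈ S, (round i θ < g x i ↔ θ < x i) := by
    intro i θ x hx
    have hgx : g x i = x i + η x := rfl
    have hηx := hη1 x hx
    rw [hround]
    simp only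
    split
    · next hF =>
        set F := (S.image (fun x => x i)).filter (· ≤ θ) with hFdef
        set θ'' := F.max' hF with hθ''
        have hθ''θ : θ'' ≤ θ := (Finset.mem_filter.1 (F.max'_mem hF)).2
        obtain ⟨u, huS, hu⟩ : ∃ u ∈ S, u i = θ'' := by
          have := (Finset.mem_filter.1 (F.max'_mem hF)).1
          rcases Finset.mem_image.1 this with ⟨u, huS, hu⟩
          exact ⟨u, huS, hu⟩
        constructor
        · intro hlt
          by_contra hnot
          push_neg at hnot
          have hxF : x i ∈ F := Finset.mem_filter.2 ⟨Finset.mem_image_of_mem _ hx, hnot⟩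
          have hle : x i ≤ θ'' := Finset.le_max' _ _ hxF
          rw [hgx] at hlt
          have := hηx.2
          linarith
        · intro hlt
          have hne : x i ≠ θ'' := by
            intro h
            rw [h] at hlt
            exact absurd hlt (not_lt.2 hθ''θ)
          have hgap := hγgap x hx u huS i (by rw [hu]; exact hne)
          rw [hu] at hgap
          have hlt2 : θ'' < x i := lt_of_le_of_lt hθ''θ hlt
          have habs : 2*γ ≤ x i - θ'' := by
            rcases abs_cases (x i - θ'') with ⟨h1, _⟩ | ⟨h1, h2⟩
            · linarith
            · linarith
          rw [hgx]
          have := hηx.1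
          linarith
    · next hF =>
        have hxgt : θ < x i := by
          by_contra hnot
          push_neg at hnot
          exact hF ⟨x i, Finset.mem_filter.2 ⟨Finset.mem_image_of_mem _ hx, hnot⟩⟩
        have hmin : (S.image (fun x => x i)).min' (hvals i) ≤ x i :=
          Finset.min'_le _ _ (Finset.mem_image_of_mem _ hx)
        refine ⟨fun _ => hxgt, fun _ => ?_⟩
        rw [hgx]
        have h1 := hηx.1
        linarith
  have hmap : ∀ t : DTree ℓ ℕ, ∃ t' : DTree ℓ ℕ, t'.shape = t.shape ∧
      ∀ x ∈ S, t'.eval (g x) = t.eval x := by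
    intro t
    induction t with
    | leaf y => exact ⟨.leaf y, rfl, fun x hx => rfl⟩
    | node i θ s l r ihl ihr =>
        obtain ⟨l', hls, hle⟩ := ihl
        obtain ⟨r', hrs, hre⟩ := ihr
        refine ⟨.node i (round i θ) s l' r', by simp [DTree.shape, hls, hrs], ?_⟩
        intro x hx
        rw [DTree.eval, DTree.eval]
        have hd : decide (round i θ < g x i) = decide (θ < x i) := by
          by_cases hc : θ < x i
          · simp [hc, (hkey i θ x hx).2 hc]
          · have h2 : ¬ round i θ < g x i := fun h => hc ((hkey i θ x hx).1 h)
            simp [hc, h2]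
        rw [hd]
        split
        · exact hle x hx
        · exact hre x hx
  set Φ : Finset (Finset (V ℓ)) → Finset (Finset (V ℓ)) :=
    fun P => P.image (fun p => p.image g) with hΦ
  have himg_inj : ∀ p ⊆ S, ∀ p' ⊆ S, p.image g = p'.image g → p = p' := by
    intro p hp p' hp' h
    ext z
    constructor
    · intro hz
      have hz' : g z ∈ p'.image g := h ▸ Finset.mem_image_of_mem g hz
      rcases Finset.mem_image.1 hz' with ⟨w, hw, hwz⟩
      rwa [hginj (hp' hw) (hp hz) hwz] at hw
    · intro hz
      have hz' : g z ∈ p.image g := by rw [h]; exact Finset.mem_image_of_mem g hz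
      rcases Finset.mem_image.1 hz' with ⟨w, hw, hwz⟩
      rwa [hginj (hp hw) (hp' hz) hwz] at hw
  have hmem_image_iff : ∀ (p : Finset (V ℓ)), p ⊆ S → ∀ z ∈ S, (g z ∈ p.image g ↔ z ∈ p) := by
    intro p hp z hz
    constructor
    · intro h
      rcases Finset.mem_image.1 h with ⟨w, hw, hwz⟩
      rwa [hginj (hp hw) hz hwz] at hw
    · exact fun h => Finset.mem_image_of_mem g h
  have hΦmaps : ∀ P ∈ PartSet ℓ T c S, Φ P ∈ PartSet ℓ T c S' := by
    rintro P ⟨hPart, hReal⟩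
    have hpS : ∀ p ∈ P, p ⊆ S := fun p hp => part_subset hPart hp
    constructor
    · refine ⟨?_, ?_, ?_, ?_⟩
      · rw [hΦ]
        rw [Finset.card_image_of_injOn, hPart.1]
        intro p hp p' hp' h
        exact himg_inj p (hpS p hp) p' (hpS p' hp') h
      · intro q hq
        rcases Finset.mem_image.1 hq with ⟨p, hp, rfl⟩
        exact (hPart.2.1 p hp).image g
      · intro q hq q' hq' hne
        rcases Finset.mem_image.1 hq with ⟨p, hp, rfl⟩
        rcases Finset.mem_image.1 hq' with ⟨p', hp', rfl⟩
        have hpp' : p ≠ p' := by rintro rfl; exact hne rfl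
        refine Finset.disjoint_left.2 fun z hz hz' => ?_
        rcases Finset.mem_image.1 hz with ⟨w, hw, rfl⟩
        rcases Finset.mem_image.1 hz' with ⟨w', hw', hww⟩
        rw [hginj (hpS p' hp' hw') (hpS p hp hw) hww] at hw'
        exact (Finset.disjoint_left.1 (hPart.2.2.1 p hp p' hp' hpp')) hw hw'
      · intro z
        constructor
        · intro hz
          rcases Finset.mem_image.1 hz with ⟨x, hx, rfl⟩
          rcases (hPart.2.2.2 x).1 hx with ⟨p, hp, hxp⟩
          exact ⟨p.image g, Finset.mem_image_of_mem _ hp, Finset.mem_image_of_mem g hxp⟩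
        · rintro ⟨q, hq, hzq⟩
          rcases Finset.mem_image.1 hq with ⟨p, hp, rfl⟩
          rcases Finset.mem_image.1 hzq with ⟨w, hw, rfl⟩
          exact Finset.mem_image_of_mem g (hpS p hp hw)
    · obtain ⟨t, hts, hte⟩ := hReal
      obtain ⟨t', hts', hte'⟩ := hmap t
      refine ⟨t', hts' ▸ hts, ?_⟩
      intro x' hx' y' hy'
      rcases Finset.mem_image.1 hx' with ⟨x, hx, rfl⟩
      rcases Finset.mem_image.1 hy' with ⟨y, hy, rfl⟩
      rw [hte' x hx, hte' y hy]
      rw [← hte x hx y hy]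
      constructor
      · rintro ⟨q, hq, hxq, hyq⟩
        rcases Finset.mem_image.1 hq with ⟨p, hp, rfl⟩
        exact ⟨p, hp, (hmem_image_iff p (hpS p hp) x hx).1 hxq,
          (hmem_image_iff p (hpS p hp) y hy).1 hyq⟩
      · rintro ⟨p, hp, hxp, hyp⟩
        exact ⟨p.image g, Finset.mem_image_of_mem _ hp,
          Finset.mem_image_of_mem g hxp, Finset.mem_image_of_mem g hyp⟩
  have hΦinj : Set.InjOn Φ (PartSet ℓ T c S) := by
    rintro P hP P' hP' h
    have hpS : ∀ p ∈ P, p ⊆ S := fun p hp => part_subset hP.1 hp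
    have hpS' : ∀ p ∈ P', p ⊆ S := fun p hp => part_subset hP'.1 hp
    ext p
    constructor
    · intro hp
      have : p.image g ∈ Φ P' := h ▸ Finset.mem_image_of_mem _ hp
      rcases Finset.mem_image.1 this with ⟨p', hp', hpp⟩
      rwa [himg_inj p' (hpS' p' hp') p (hpS p hp) hpp] at hp'
    · intro hp
      have : p.image g ∈ Φ P := by rw [h]; exact Finset.mem_image_of_mem _ hp
      rcases Finset.mem_image.1 this with ⟨p', hp', hpp⟩
      rwa [himg_inj p' (hpS p' hp') p (hpS' p hp) hpp] at hp'
  refine ⟨S', hcard', hgen, ?_⟩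
  calc (PartSet ℓ T c S).ncard = (Φ '' PartSet ℓ T c S).ncard :=
        (Set.ncard_image_of_injOn hΦinj).symm
    _ ≤ (PartSet ℓ T c S').ncard := by
        refine Set.ncard_le_ncard ?_ partset_finite
        rintro Q ⟨P, hP, rfl⟩
        exact hΦmaps P hP

end Perturb


section MatchCount

variable {α β : Type*} [DecidableEq α] [DecidableEq β]

/-- partial matchings between two finsets, encoded as graphs -/
noncomputable def matchings (P1 : Finset α) (P2 : Finset β) (j : ℕ) :
    Finset (Finset (α × β)) :=
  ((P1 ×ˢ P2).powerset).filter (fun M => M.card = j ∧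
    (∀ z ∈ M, ∀ w ∈ M, z.1 = w.1 → z = w) ∧ (∀ z ∈ M, ∀ w ∈ M, z.2 = w.2 → z = w))

lemma card_matchings (P1 : Finset α) (P2 : Finset β) (j : ℕ) :
    (matchings P1 P2 j).card ≤ P1.card.choose j * (P2.card.choose j * j.factorial) := by
  classical
  have hsub : matchings P1 P2 j ⊆ (P1.powersetCard j).biUnion
      (fun M1 => (matchings P1 P2 j).filter (fun M => M.image Prod.fst = M1)) := by
    intro M hM
    have hMf := Finset.mem_filter.1 hM
    have hMsub := Finset.mem_powerset.1 hMf.1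
    obtain ⟨hcard, hfst, hsnd⟩ := hMf.2
    refine Finset.mem_biUnion.2 ⟨M.image Prod.fst, ?_, Finset.mem_filter.2 ⟨hM, rfl⟩⟩
    refine Finset.mem_powersetCard.2 ⟨?_, ?_⟩
    · intro x hx
      rcases Finset.mem_image.1 hx with ⟨z, hz, rfl⟩
      exact (Finset.mem_product.1 (hMsub hz)).1
    · rw [Finset.card_image_of_injOn, hcard]
      intro z hz w hw h
      exact hfst z hz w hw h
  have hcardB := Finset.card_le_card hsub
  refine le_trans hcardB (le_trans (Finset.card_biUnion_le) ?_)
  have hbound : ∀ M1 ∈ P1.powersetCard j,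
      ((matchings P1 P2 j).filter (fun M => M.image Prod.fst = M1)).card ≤
        P2.card.choose j * j.factorial := by
    intro M1 hM1
    have hM1card : M1.card = j := (Finset.mem_powersetCard.1 hM1).2
    set F := (matchings P1 P2 j).filter (fun M => M.image Prod.fst = M1) with hF
    -- inject F into embeddings from ↥M1 to ↥P2
    have hinj : ∃ f : {M // M ∈ F} → ({x // x ∈ M1} ↪ {y // y ∈ P2}),
        Function.Injective f := by
      have hchoose : ∀ M : {M // M ∈ F}, ∀ x : {x // x ∈ M1},
          ∃! z, z ∈ M.1 ∧ z.1 = x.1 := by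
        rintro ⟨M, hMF⟩ ⟨x, hx⟩
        obtain ⟨hM, himg⟩ := Finset.mem_filter.1 hMF
        have hfst := (Finset.mem_filter.1 hM).2.2.1
        rw [← himg] at hx
        rcases Finset.mem_image.1 hx with ⟨z, hz, hzx⟩
        refine ⟨z, ⟨hz, hzx⟩, ?_⟩
        rintro w ⟨hw, hwx⟩
        exact hfst w hw z hz (by rw [hwx, hzx])
      set pick : ∀ M : {M // M ∈ F}, ∀ x : {x // x ∈ M1}, α × β :=
        fun M x => (hchoose M x).choose with hpick
      have hpickspec : ∀ M x, (pick M x) ∈ M.1 ∧ (pick M x).1 = x.1 :=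
        fun M x => (hchoose M x).choose_spec.1
      refine ⟨fun M => ⟨fun x => ⟨(pick M x).2, ?_⟩, ?_⟩, ?_⟩
      · -- lands in P2
        obtain ⟨hM, _⟩ := Finset.mem_filter.1 M.2
        have hMsub := Finset.mem_powerset.1 (Finset.mem_filter.1 hM).1
        exact (Finset.mem_product.1 (hMsub (hpickspec M x).1)).2
      · -- injective embedding
        rintro x y hxy
        obtain ⟨hM, _⟩ := Finset.mem_filter.1 M.2
        have hsnd := (Finset.mem_filter.1 hM).2.2.2
        have h2 : (pick M x).2 = (pick M y).2 := congrArg Subtype.val hxy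
        have := hsnd _ (hpickspec M x).1 _ (hpickspec M y).1 h2
        have hx1 := (hpickspec M x).2
        have hy1 := (hpickspec M y).2
        apply Subtype.ext
        rw [← hx1, ← hy1, this]
      · -- injectivity in M
        rintro ⟨M, hMF⟩ ⟨M', hMF'⟩ hMM'
        have hgraph : ∀ (N : Finset (α × β)) (hN : N ∈ F), ∀ z : α × β,
            z ∈ N ↔ ∃ hz1 : z.1 ∈ M1, (pick ⟨N, hN⟩ ⟨z.1, hz1⟩) = z := by
          intro N hN z
          obtain ⟨hNm, himg⟩ := Finset.mem_filter.1 hN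
          constructor
          · intro hz
            have hz1 : z.1 ∈ M1 := by rw [← himg]; exact Finset.mem_image_of_mem _ hz
            refine ⟨hz1, ?_⟩
            have hu := (hchoose ⟨N, hN⟩ ⟨z.1, hz1⟩)
            exact (hu.unique (hpickspec ⟨N, hN⟩ ⟨z.1, hz1⟩) ⟨hz, rfl⟩)
          · rintro ⟨hz1, hzp⟩
            rw [← hzp]
            exact (hpickspec ⟨N, hN⟩ ⟨z.1, hz1⟩).1
        apply Subtype.ext
        ext z
        rw [hgraph M hMF z, hgraph M' hMF' z]
        constructor
        · rintro ⟨h1, h2⟩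
          refine ⟨h1, ?_⟩
          have happ := congrFun (congrArg (fun (e : {x // x ∈ M1} ↪ {y // y ∈ P2}) => (e : {x // x ∈ M1} → {y // y ∈ P2})) hMM') ⟨z.1, h1⟩
          have h2' : (pick ⟨M, hMF⟩ ⟨z.1, h1⟩).2 = (pick ⟨M', hMF'⟩ ⟨z.1, h1⟩).2 :=
            congrArg Subtype.val happ
          have ha := (hpickspec ⟨M, hMF⟩ ⟨z.1, h1⟩)
          have hb := (hpickspec ⟨M', hMF'⟩ ⟨z.1, h1⟩)
          have : pick ⟨M', hMF'⟩ ⟨z.1, h1⟩ = pick ⟨M, hMF⟩ ⟨z.1, h1⟩ := by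
            apply Prod.ext
            · rw [ha.2, hb.2]
            · rw [h2']
          rw [this, h2]
        · rintro ⟨h1, h2⟩
          refine ⟨h1, ?_⟩
          have happ := congrFun (congrArg (fun (e : {x // x ∈ M1} ↪ {y // y ∈ P2}) => (e : {x // x ∈ M1} → {y // y ∈ P2})) hMM') ⟨z.1, h1⟩
          have h2' : (pick ⟨M, hMF⟩ ⟨z.1, h1⟩).2 = (pick ⟨M', hMF'⟩ ⟨z.1, h1⟩).2 :=
            congrArg Subtype.val happ
          have ha := (hpickspec ⟨M, hMF⟩ ⟨z.1, h1⟩)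
          have hb := (hpickspec ⟨M', hMF'⟩ ⟨z.1, h1⟩)
          have : pick ⟨M, hMF⟩ ⟨z.1, h1⟩ = pick ⟨M', hMF'⟩ ⟨z.1, h1⟩ := by
            apply Prod.ext
            · rw [ha.2, hb.2]
            · rw [h2']
          rw [this, h2]
    obtain ⟨f, hf⟩ := hinj
    have h1 : F.card = Fintype.card {M // M ∈ F} := (Fintype.card_coe F).symm
    have h2 : Fintype.card {M // M ∈ F} ≤ Fintype.card ({x // x ∈ M1} ↪ {y // y ∈ P2}) :=
      Fintype.card_le_of_injective f hf
    rw [h1]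
    refine le_trans h2 ?_
    rw [Fintype.card_embedding_eq, Fintype.card_coe, Fintype.card_coe, hM1card]
    rw [Nat.descFactorial_eq_factorial_mul_choose]
    rw [Nat.mul_comm]
  calc ∑ M1 ∈ P1.powersetCard j,
        ((matchings P1 P2 j).filter (fun M => M.image Prod.fst = M1)).card
      ≤ ∑ M1 ∈ P1.powersetCard j, P2.card.choose j * j.factorial :=
        Finset.sum_le_sum hbound
    _ = P1.card.choose j * (P2.card.choose j * j.factorial) := by
        rw [Finset.sum_const, Finset.card_powersetCard, smul_eq_mul]

end MatchCount


section Recon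

variable {α : Type*} [DecidableEq α]

/-- the merge pattern of a partition across a split -/
noncomputable def sigmaOf (P : Finset (Finset α)) (A B : Finset α) :
    Finset (Finset α × Finset α) :=
  (P.image (fun p => (p ∩ A, p ∩ B))).filter (fun z => z.1.Nonempty ∧ z.2.Nonempty)

/-- reconstruction of a partition from its two restrictions and merge pattern -/
noncomputable def recon (P1 P2 : Finset (Finset α)) (M : Finset (Finset α × Finset α)) :
    Finset (Finset α) :=
  (M.image fun z => z.1 ∪ z.2) ∪ (P1.filter fun q => ∀ z ∈ M, z.1 ≠ q) ∪
    (P2.filter fun r => ∀ z ∈ M, z.2 ≠ r)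

lemma inter_union_sdiff_self {p S A : Finset α} (hps : p ⊆ S) :
    p ∩ A ∪ p ∩ (S \ A) = p := by
  ext x
  simp only [Finset.mem_union, Finset.mem_inter, Finset.mem_sdiff]
  constructor
  · rintro (⟨h1, _⟩ | ⟨h1, _⟩) <;> exact h1
  · intro hx
    by_cases hxA : x ∈ A
    · exact Or.inl ⟨hx, hxA⟩
    · exact Or.inr ⟨hx, hps hx, hxA⟩

lemma recon_eq {S : Finset α} {c : ℕ} {P : Finset (Finset α)} (hP : IsPartition S c P)
    {A : Finset α} :
    recon (restrict P A) (restrict P (S \ A)) (sigmaOf P A (S \ A)) = P := by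
  ext p
  simp only [recon, Finset.mem_union]
  constructor
  · rintro ((h | h) | h)
    · rcases Finset.mem_image.1 h with ⟨z, hz, rfl⟩
      rcases Finset.mem_image.1 (Finset.mem_filter.1 hz).1 with ⟨p', hp', rfl⟩
      rw [inter_union_sdiff_self (part_subset hP hp')]
      exact hp'
    · have hq := Finset.mem_filter.1 h
      rcases (mem_restrict.1 hq.1).1 with ⟨p', hp', rfl⟩
      have hne := (mem_restrict.1 hq.1).2
      have hBempty : p' ∩ (S \ A) = ∅ := by
        by_contra hB
        have hBne : (p' ∩ (S \ A)).Nonempty := Finset.nonempty_iff_ne_empty.2 hB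
        have hzmem : (p' ∩ A, p' ∩ (S \ A)) ∈ sigmaOf P A (S \ A) :=
          Finset.mem_filter.2 ⟨Finset.mem_image_of_mem _ hp', hne, hBne⟩
        exact hq.2 _ hzmem rfl
      have heq : p' ∩ A = p' := by
        have h2 := inter_union_sdiff_self (S := S) (A := A) (part_subset hP hp')
        rwa [hBempty, Finset.union_empty] at h2
      rwa [heq]
    · have hq := Finset.mem_filter.1 h
      rcases (mem_restrict.1 hq.1).1 with ⟨p', hp', rfl⟩
      have hne := (mem_restrict.1 hq.1).2
      have hAempty : p' ∩ A = ∅ := by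
        by_contra hA
        have hAne : (p' ∩ A).Nonempty := Finset.nonempty_iff_ne_empty.2 hA
        have hzmem : (p' ∩ A, p' ∩ (S \ A)) ∈ sigmaOf P A (S \ A) :=
          Finset.mem_filter.2 ⟨Finset.mem_image_of_mem _ hp', hAne, hne⟩
        exact hq.2 _ hzmem rfl
      have heq : p' ∩ (S \ A) = p' := by
        have h2 := inter_union_sdiff_self (S := S) (A := A) (part_subset hP hp')
        rwa [hAempty, Finset.empty_union] at h2
      rwa [heq]
  · intro hp
    have hps := part_subset hP hp
    by_cases hA : (p ∩ A).Nonempty <;> by_cases hB : (p ∩ (S \ A)).Nonempty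
    · refine Or.inl (Or.inl (Finset.mem_image.2 ⟨(p ∩ A, p ∩ (S \ A)),
        Finset.mem_filter.2 ⟨Finset.mem_image_of_mem _ hp, hA, hB⟩, ?_⟩))
      exact inter_union_sdiff_self hps
    · have hpA : p ∩ A = p := by
        have h2 := inter_union_sdiff_self (S := S) (A := A) hps
        rw [Finset.not_nonempty_iff_eq_empty.1 hB, Finset.union_empty] at h2
        exact h2
      refine Or.inl (Or.inr (Finset.mem_filter.2 ⟨mem_restrict.2 ⟨⟨p, hp, hpA⟩, hpA ▸ hA⟩, ?_⟩))
      rintro z hz hzp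
      rcases Finset.mem_image.1 (Finset.mem_filter.1 hz).1 with ⟨p', hp', rfl⟩
      have hBne : (p' ∩ (S \ A)).Nonempty := (Finset.mem_filter.1 hz).2.2
      have hzp' : p' ∩ A = p := hzp
      have hpp : p' = p := by
        refine restrict_inter_inj hP hp' hp ?_ (by rw [hzp']; exact hpA ▸ hA)
        rw [hzp', hpA]
      rw [hpp] at hBne
      exact hB hBne
    · have hpB : p ∩ (S \ A) = p := by
        have h2 := inter_union_sdiff_self (S := S) (A := A) hps
        rw [Finset.not_nonempty_iff_eq_empty.1 hA, Finset.empty_union] at h2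
        exact h2
      refine Or.inr (Finset.mem_filter.2 ⟨mem_restrict.2 ⟨⟨p, hp, hpB⟩, hpB ▸ hB⟩, ?_⟩)
      rintro z hz hzp
      rcases Finset.mem_image.1 (Finset.mem_filter.1 hz).1 with ⟨p', hp', rfl⟩
      have hAne : (p' ∩ A).Nonempty := (Finset.mem_filter.1 hz).2.1
      have hzp' : p' ∩ (S \ A) = p := hzp
      have hpp : p' = p := by
        have hinj := restrict_inter_inj (A := S \ A) hP hp' hp
        refine hinj ?_ (by rw [hzp']; exact hpB ▸ hB)
        rw [hzp', hpB]
      rw [hpp] at hAne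
      exact hA hAne
    · exfalso
      rcases hP.2.1 p hp with ⟨x, hx⟩
      by_cases hxA : x ∈ A
      · exact hA ⟨x, Finset.mem_inter.2 ⟨hx, hxA⟩⟩
      · exact hB ⟨x, Finset.mem_inter.2 ⟨hx, Finset.mem_sdiff.2 ⟨hps hx, hxA⟩⟩⟩

lemma card_partition_split {S : Finset α} {c : ℕ} {P : Finset (Finset α)}
    (hP : IsPartition S c P) (A : Finset α) :
    P.card + (sigmaOf P A (S \ A)).card
      = (restrict P A).card + (restrict P (S \ A)).card := by
  set B := S \ A with hBdef
  set PA := P.filter (fun p => (p ∩ A).Nonempty) with hPA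
  set PB := P.filter (fun p => (p ∩ B).Nonempty) with hPB
  have hunion : PA ∪ PB = P := by
    apply Finset.Subset.antisymm
    · intro p hp
      rcases Finset.mem_union.1 hp with h | h
      · exact (Finset.mem_filter.1 h).1
      · exact (Finset.mem_filter.1 h).1
    · intro p hp
      rcases hP.2.1 p hp with ⟨x, hx⟩
      by_cases hxA : x ∈ A
      · exact Finset.mem_union.2 (Or.inl (Finset.mem_filter.2 ⟨hp, ⟨x, Finset.mem_inter.2 ⟨hx, hxA⟩⟩⟩))
      · refine Finset.mem_union.2 (Or.inr (Finset.mem_filter.2 ⟨hp, ⟨x, Finset.mem_inter.2 ⟨hx, ?_⟩⟩⟩))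
        exact Finset.mem_sdiff.2 ⟨part_subset hP hp hx, hxA⟩
  have hrA : restrict P A = PA.image (· ∩ A) := by
    ext q
    rw [mem_restrict]
    constructor
    · rintro ⟨⟨p, hp, rfl⟩, hne⟩
      exact Finset.mem_image.2 ⟨p, Finset.mem_filter.2 ⟨hp, hne⟩, rfl⟩
    · intro h
      rcases Finset.mem_image.1 h with ⟨p, hp, rfl⟩
      exact ⟨⟨p, (Finset.mem_filter.1 hp).1, rfl⟩, (Finset.mem_filter.1 hp).2⟩
  have hrB : restrict P B = PB.image (· ∩ B) := by
    ext q
    rw [mem_restrict]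
    constructor
    · rintro ⟨⟨p, hp, rfl⟩, hne⟩
      exact Finset.mem_image.2 ⟨p, Finset.mem_filter.2 ⟨hp, hne⟩, rfl⟩
    · intro h
      rcases Finset.mem_image.1 h with ⟨p, hp, rfl⟩
      exact ⟨⟨p, (Finset.mem_filter.1 hp).1, rfl⟩, (Finset.mem_filter.1 hp).2⟩
  have hcA : (restrict P A).card = PA.card := by
    rw [hrA]
    apply Finset.card_image_of_injOn
    intro p hp p' hp' h
    exact restrict_inter_inj hP (Finset.mem_filter.1 hp).1 (Finset.mem_filter.1 hp').1 h
      (Finset.mem_filter.1 hp).2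
  have hcB : (restrict P B).card = PB.card := by
    rw [hrB]
    apply Finset.card_image_of_injOn
    intro p hp p' hp' h
    exact restrict_inter_inj hP (Finset.mem_filter.1 hp).1 (Finset.mem_filter.1 hp').1 h
      (Finset.mem_filter.1 hp).2
  have hσ : sigmaOf P A B = (PA ∩ PB).image (fun p => (p ∩ A, p ∩ B)) := by
    ext z
    simp only [sigmaOf, Finset.mem_filter, Finset.mem_image]
    constructor
    · rintro ⟨⟨p, hp, rfl⟩, h1, h2⟩
      exact ⟨p, Finset.mem_inter.2 ⟨Finset.mem_filter.2 ⟨hp, h1⟩, Finset.mem_filter.2 ⟨hp, h2⟩⟩, rfl⟩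
    · rintro ⟨p, hp, rfl⟩
      rcases Finset.mem_inter.1 hp with ⟨h1, h2⟩
      exact ⟨⟨p, (Finset.mem_filter.1 h1).1, rfl⟩, (Finset.mem_filter.1 h1).2,
        (Finset.mem_filter.1 h2).2⟩
  have hcσ : (sigmaOf P A B).card = (PA ∩ PB).card := by
    rw [hσ]
    apply Finset.card_image_of_injOn
    intro p hp p' hp' h
    have h1 : p ∩ A = p' ∩ A := congrArg Prod.fst h
    exact restrict_inter_inj hP
      (Finset.mem_filter.1 (Finset.mem_inter.1 hp).1).1
      (Finset.mem_filter.1 (Finset.mem_inter.1 hp').1).1 h1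
      (Finset.mem_filter.1 (Finset.mem_inter.1 hp).1).2
  rw [hcA, hcB, hcσ, ← hunion, Finset.card_union_add_card_inter]

end Recon


section Coverage

variable {ℓ : ℕ}

lemma leaves_pos (T : TreeStruct) : 1 ≤ T.leaves := by
  induction T with
  | leaf => exact le_refl 1
  | node l r ihl ihr => simp only [TreeStruct.leaves]; omega

/-- directional key for feature `i` and sign `s` -/
def keyof (i : Fin ℓ) (s : Bool) : V ℓ → ℝ := fun x => if s then x i else -(x i)

lemma keyof_inj {S : Finset (V ℓ)} (hgen : ∀ x ∈ S, ∀ y ∈ S, x ≠ y → ∀ i, x i ≠ y i)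
    (i : Fin ℓ) (s : Bool) :
    ∀ x ∈ S, ∀ y ∈ S, x ≠ y → keyof i s x ≠ keyof i s y := by
  intro x hx y hy hne
  have := hgen x hx y hy hne i
  cases s <;> simp [keyof, this]

lemma filter_upperOn {S : Finset (V ℓ)} (i : Fin ℓ) (θ : ℝ) (s : Bool) :
    UpperOn (keyof i s) S (S.filter (fun x => decide (θ < x i) = s)) := by
  constructor
  · exact Finset.filter_subset _ _
  · intro x hx y hy hyB
    have hxf := (Finset.mem_filter.1 hx).2
    have hyf : ¬ (decide (θ < y i) = s) := fun h => hyB (Finset.mem_filter.2 ⟨hy, h⟩)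
    cases s
    · simp only [decide_eq_false_iff_not, not_not, decide_eq_true_eq] at hxf hyf
      simp only [keyof]
      simp only [Bool.false_eq_true, if_false]
      have : x i ≤ θ := not_lt.1 hxf
      linarith [hyf, this]
    · simp only [decide_eq_true_eq] at hxf
      have hy' : ¬ (θ < y i) := fun h => hyf (decide_eq_true h)
      simp only [keyof, if_true]
      have : y i ≤ θ := not_lt.1 hy'
      linarith

lemma eval_node_left {Y : Type} (i : Fin ℓ) (θ : ℝ) (s : Bool) (tl tr : DTree ℓ Y)
    {x : V ℓ} (h : decide (θ < x i) = s) :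
    (DTree.node i θ s tl tr).eval x = tl.eval x := by
  rw [DTree.eval, if_pos h]

lemma eval_node_right {Y : Type} (i : Fin ℓ) (θ : ℝ) (s : Bool) (tl tr : DTree ℓ Y)
    {x : V ℓ} (h : ¬ (decide (θ < x i) = s)) :
    (DTree.node i θ s tl tr).eval x = tr.eval x := by
  rw [DTree.eval, if_neg h]

lemma eval_mirror {Y : Type} (i : Fin ℓ) (θ : ℝ) (s : Bool) (tl tr : DTree ℓ Y) (x : V ℓ) :
    (DTree.node i θ (!s) tr tl).eval x = (DTree.node i θ s tl tr).eval x := by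
  rw [DTree.eval, DTree.eval]
  cases s <;> cases hd : decide (θ < x i) <;> simp [hd]

lemma mirror_filter (S : Finset (V ℓ)) (i : Fin ℓ) (θ : ℝ) (s : Bool) :
    S.filter (fun x => decide (θ < x i) = !s) = S \ S.filter (fun x => decide (θ < x i) = s) := by
  ext x
  simp only [Finset.mem_filter, Finset.mem_sdiff]
  constructor
  · intro ⟨hx, hd⟩
    refine ⟨hx, fun h => ?_⟩
    rw [h.2] at hd
    cases s <;> simp at hd
  · intro ⟨hx, hd⟩
    refine ⟨hx, ?_⟩
    have : ¬ decide (θ < x i) = s := fun h => hd ⟨hx, h⟩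
    cases s <;> cases h2 : decide (θ < x i) <;> simp_all

/-- realizability of a restriction through a sub-witness -/
lemma restrict_realizable_aux {T1 : TreeStruct} {S D : Finset (V ℓ)} {c : ℕ}
    {P : Finset (Finset (V ℓ))} (hP : IsPartition S c P) (t : DTree ℓ ℕ)
    (ht : ∀ x ∈ S, ∀ y ∈ S, ((∃ p ∈ P, x ∈ p ∧ y ∈ p) ↔ t.eval x = t.eval y))
    (t' : DTree ℓ ℕ) (hs : t'.shape = T1) (hD : D ⊆ S)
    (he : ∀ x ∈ D, t'.eval x = t.eval x) :
    TreeRealizable ℓ T1 D (restrict P D) := by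
  refine ⟨t', hs, ?_⟩
  intro x hx y hy
  rw [restrict_same_part hP hx hy, ht x (hD hx) y (hD hy), he x hx, he y hy]

/-- The coverage lemma: on a generic sample, every partition realized by a tree with
root rule `(i, θ, s)` admits a decomposition with a top-set of size in the range. -/
lemma coverage (hℓ : 1 ≤ ℓ) {Tl Tr : TreeStruct} {c m : ℕ} {S : Finset (V ℓ)}
    (hgen : ∀ x ∈ S, ∀ y ∈ S, x ≠ y → ∀ i, x i ≠ y i)
    (hS : S.card = m) (hm : Tl.leaves + Tr.leaves < m)
    {P : Finset (Finset (V ℓ))} (hP : IsPartition S c P)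
    (i : Fin ℓ) (θ : ℝ) (s : Bool) (tl tr : DTree ℓ ℕ)
    (hsl : tl.shape = Tl) (hsr : tr.shape = Tr)
    (hte : ∀ x ∈ S, ∀ y ∈ S, ((∃ p ∈ P, x ∈ p ∧ y ∈ p) ↔
      (DTree.node i θ s tl tr).eval x = (DTree.node i θ s tl tr).eval y)) :
    ∃ A : Finset (V ℓ),
      (∃ i' s', A = tops (keyof i' s') A.card S) ∧
      A.card ∈ Finset.Icc Tl.leaves (m - Tr.leaves) ∧
      TreeRealizable ℓ Tl A (restrict P A) ∧
      TreeRealizable ℓ Tr (S \ A) (restrict P (S \ A)) ∧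
      (((S.filter (fun x => decide (θ < x i) = s)).card < Tl.leaves ∧
          S.filter (fun x => decide (θ < x i) = s) ⊆ A ∧ A.card = Tl.leaves) ∨
       (Tl.leaves ≤ (S.filter (fun x => decide (θ < x i) = s)).card ∧
          A ⊆ S.filter (fun x => decide (θ < x i) = s) ∧
          A.card = min (S.filter (fun x => decide (θ < x i) = s)).card (m - Tr.leaves))) := by
  set A0 := S.filter (fun x => decide (θ < x i) = s) with hA0
  set k0 := A0.card with hk0
  have hkey := keyof_inj hgen i s
  have hA0S : A0 ⊆ S := Finset.filter_subset _ _
  have hk0m : k0 ≤ m := hS ▸ Finset.card_le_card hA0S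
  have hA0tops : A0 = tops (keyof i s) k0 S := upper_eq_tops _ (filter_upperOn i θ s)
  have hLl : 1 ≤ Tl.leaves := leaves_pos Tl
  have hLr : 1 ≤ Tr.leaves := leaves_pos Tr
  have hrange : Tl.leaves ≤ m - Tr.leaves := by omega
  set k1 := if k0 < Tl.leaves then Tl.leaves else min k0 (m - Tr.leaves) with hk1
  have hk1m : k1 ≤ m := by
    rw [hk1]; split <;> omega
  set A := tops (keyof i s) k1 S with hA
  have hAcard : A.card = k1 := by
    rw [hA, tops_card, hS]; omega
  have hAS : A ⊆ S := tops_subset _ _ _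
  have hAIcc : A.card ∈ Finset.Icc Tl.leaves (m - Tr.leaves) := by
    rw [hAcard, Finset.mem_Icc, hk1]
    split <;> omega
  have hcompl : (S \ A).card = m - k1 := by
    rw [Finset.card_sdiff_of_subset hAS, hS, hAcard]
  refine ⟨A, ⟨i, s, by rw [hAcard, ← hA]⟩, hAIcc, ?_, ?_, ?_⟩
  · -- left realizability
    by_cases hcase : k0 < Tl.leaves
    · -- grow: shatter A by Tl
      refine shatter_realizable hℓ ⟨0, hℓ⟩ Tl A _ (restrict P A)
        (fun x hx y hy hne => hgen x (hAS hx) y (hAS hy) hne _)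
        (isPartition_restrict hP hAS) ?_
      rw [hAcard, hk1, if_pos hcase]
    · -- A ⊆ A0 : use the left subtree
      have hsub : A ⊆ A0 := by
        rw [hA, hA0tops]
        refine tops_mono _ ?_ S
        rw [hk1, if_neg hcase]; omega
      refine restrict_realizable_aux hP _ hte tl hsl hAS ?_
      intro x hx
      exact (eval_node_left i θ s tl tr ((Finset.mem_filter.1 (hsub hx)).2)).symm
  · -- right realizability
    by_cases hcase : min k0 (m - Tr.leaves) = k0 ∨ k0 < Tl.leaves
    · -- S \ A ⊆ S \ A0 : use the right subtree
      have hsub : A0 ⊆ A := by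
        rw [hA, hA0tops]
        refine tops_mono _ ?_ S
        rw [hk1]
        rcases hcase with h | h
        · split <;> omega
        · rw [if_pos h]; omega
      refine restrict_realizable_aux hP _ hte tr hsr Finset.sdiff_subset ?_
      intro x hx
      have hxA0 : x ∉ A0 := fun h => (Finset.mem_sdiff.1 hx).2 (hsub h)
      have : ¬ (decide (θ < x i) = s) := fun h =>
        hxA0 (Finset.mem_filter.2 ⟨(Finset.mem_sdiff.1 hx).1, h⟩)
      exact (eval_node_right i θ s tl tr this).symm
    · -- shrink case with k1 = m - Tr.leaves : shatter S \ A by Tr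
      push_neg at hcase
      have hk1eq : k1 = m - Tr.leaves := by
        rw [hk1, if_neg (by omega)]
        omega
      refine shatter_realizable hℓ ⟨0, hℓ⟩ Tr (S \ A) _ (restrict P (S \ A))
        (fun x hx y hy hne => hgen x (Finset.sdiff_subset hx) y (Finset.sdiff_subset hy) hne _)
        (isPartition_restrict hP Finset.sdiff_subset) ?_
      rw [hcompl, hk1eq]
      omega
  · -- side condition
    by_cases hcase : k0 < Tl.leaves
    · refine Or.inl ⟨hcase, ?_, by rw [hAcard, hk1, if_pos hcase]⟩
      rw [hA, hA0tops]
      refine tops_mono _ ?_ S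
      rw [hk1, if_pos hcase]; omega
    · refine Or.inr ⟨by omega, ?_, by rw [hAcard, hk1, if_neg hcase]⟩
      rw [hA, hA0tops]
      refine tops_mono _ ?_ S
      rw [hk1, if_neg hcase]; omega

end Coverage


section Main

variable {ℓ : ℕ}

/-- realizable `a`-partitions of a sample, as a finset -/
noncomputable def RPF (ℓ : ℕ) (T1 : TreeStruct) (a : ℕ) (D : Finset (V ℓ)) :
    Finset (Finset (Finset (V ℓ))) :=
  D.powerset.powerset.filter (fun Q => IsPartition D a Q ∧ TreeRealizable ℓ T1 D Q)

lemma mem_RPF {T1 : TreeStruct} {a : ℕ} {D : Finset (V ℓ)} {Q : Finset (Finset (V ℓ))} :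
    Q ∈ RPF ℓ T1 a D ↔ IsPartition D a Q ∧ TreeRealizable ℓ T1 D Q := by
  simp only [RPF, Finset.mem_filter, Finset.mem_powerset, and_iff_right_iff_imp]
  intro h
  intro p hp
  exact Finset.mem_powerset.2 (part_subset h.1 hp)

lemma coe_RPF (T1 : TreeStruct) (a : ℕ) (D : Finset (V ℓ)) :
    ↑(RPF ℓ T1 a D) = PartSet ℓ T1 a D := by
  ext Q
  rw [Finset.mem_coe, mem_RPF]
  rfl

lemma card_RPF_le_treePi (T1 : TreeStruct) (a : ℕ) (D : Finset (V ℓ)) :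
    (RPF ℓ T1 a D).card ≤ treePi ℓ T1 a D.card := by
  have h := ncard_le_treePi (T := T1) (a := a) (S := D) rfl
  rwa [← coe_RPF, Set.ncard_coe_finset] at h

lemma main_generic (hℓ : 1 ≤ ℓ) (Tl Tr : TreeStruct) (c m : ℕ) (hc : 1 ≤ c)
    (hm : (TreeStruct.node Tl Tr).leaves < m) (S : Finset (V ℓ)) (hS : S.card = m)
    (hgen : ∀ x ∈ S, ∀ y ∈ S, x ≠ y → ∀ i, x i ≠ y i) :
    2 ^ (if Tl = Tr then 1 else 0) * (PartSet ℓ (TreeStruct.node Tl Tr) c S).ncard ≤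
      ∑ k ∈ Finset.Icc Tl.leaves (m - Tr.leaves),
        min (2 * ℓ) (m.choose k) *
          ∑ p ∈ (Finset.Icc 1 c ×ˢ Finset.Icc 1 c).filter (fun p => c ≤ p.1 + p.2),
            p.1.choose (c - p.2) * p.2.choose (c - p.1) * (p.1 + p.2 - c).factorial *
              treePi ℓ Tl p.1 k * treePi ℓ Tr p.2 (m - k) := by
  classical
  have hmL : Tl.leaves + Tr.leaves < m := hm
  have hLl : 1 ≤ Tl.leaves := leaves_pos Tl
  have hLr : 1 ≤ Tr.leaves := leaves_pos Tr
  set PF := RPF ℓ (TreeStruct.node Tl Tr) c S with hPF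
  have hncard : (PartSet ℓ (TreeStruct.node Tl Tr) c S).ncard = PF.card := by
    rw [hPF, ← coe_RPF, Set.ncard_coe_finset]
  set covProp : Finset (Finset (V ℓ)) → Finset (V ℓ) → Prop := fun P A =>
    (∃ i' s', A = tops (keyof i' s') A.card S) ∧
    A.card ∈ Finset.Icc Tl.leaves (m - Tr.leaves) ∧
    TreeRealizable ℓ Tl A (restrict P A) ∧
    TreeRealizable ℓ Tr (S \ A) (restrict P (S \ A)) with hcovProp
  have cov2 : ∀ P ∈ PF, ∃ AB : Finset (V ℓ) × Finset (V ℓ),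
      covProp P AB.1 ∧ covProp P AB.2 ∧ (Tl = Tr → AB.1 ≠ AB.2) := by
    intro P hPmem
    obtain ⟨hPart, hReal⟩ := mem_RPF.1 hPmem
    obtain ⟨t, hts, hte⟩ := hReal
    cases t with
    | leaf y => exact absurd hts (by simp [DTree.shape])
    | node i θ s tl tr =>
      rw [DTree.shape] at hts
      have hpair := TreeStruct.node.inj hts
      have hsl : tl.shape = Tl := hpair.1
      have hsr : tr.shape = Tr := hpair.2
      obtain ⟨A, hA1, hA2, hA3, hA4, hA5⟩ :=
        coverage hℓ hgen hS hmL hPart i θ s tl tr hsl hsr hte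
      by_cases hTT : Tl = Tr
      · -- also use the mirrored witness
        subst hTT
        have hte' : ∀ x ∈ S, ∀ y ∈ S, ((∃ p ∈ P, x ∈ p ∧ y ∈ p) ↔
            (DTree.node i θ (!s) tr tl).eval x = (DTree.node i θ (!s) tr tl).eval y) := by
          intro x hx y hy
          rw [eval_mirror, eval_mirror]
          exact hte x hx y hy
        have hmL' : Tl.leaves + Tl.leaves < m := by omega
        obtain ⟨B, hB1, hB2, hB3, hB4, hB5⟩ :=
          coverage hℓ hgen hS hmL' hPart i θ (!s) tr tl hsr hsl hte'
        refine ⟨(A, B), ⟨hA1, hA2, hA3, hA4⟩, ⟨hB1, hB2, hB3, hB4⟩, fun _ => ?_⟩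
        rw [mirror_filter] at hB5
        set A0 := S.filter (fun x => decide (θ < x i) = s) with hA0
        have hA0S : A0 ⊆ S := Finset.filter_subset _ _
        have hk0 : (S \ A0).card = m - A0.card := by
          rw [Finset.card_sdiff_of_subset hA0S, hS]
        have hk0m : A0.card ≤ m := hS ▸ Finset.card_le_card hA0S
        set L := Tl.leaves with hLdef
        intro hABeq0
        have hABeq : A = B := hABeq0
        rcases hA5 with ⟨ha1, ha2, ha3⟩ | ⟨ha1, ha2, ha3⟩ <;>
          rcases hB5 with ⟨hb1, hb2, hb3⟩ | ⟨hb1, hb2, hb3⟩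
        · omega
        · -- A grow, B shrink
          have hmin : min (S \ A0).card (m - L) = m - L := min_eq_right (by omega)
          rw [hmin] at hb3
          rw [hABeq, hb3] at ha3
          omega
        · -- A shrink, B grow
          have hmin : min A0.card (m - L) = m - L := min_eq_right (by omega)
          rw [hmin] at ha3
          rw [hABeq, hb3] at ha3
          omega
        · -- both shrink
          have hAne : A.Nonempty := by
            rw [← Finset.card_pos, ha3]
            have h1 : 1 ≤ min A0.card (m - L) := le_min (by omega) (by omega)
            omega
          rcases hAne with ⟨x, hx⟩
          have hx1 : x ∈ A0 := ha2 hx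
          have hx2 : x ∈ S \ A0 := hb2 (hABeq ▸ hx)
          exact (Finset.mem_sdiff.1 hx2).2 hx1
      · exact ⟨(A, A), ⟨hA1, hA2, hA3, hA4⟩, ⟨hA1, hA2, hA3, hA4⟩, fun h => absurd h hTT⟩
  choose fAB hfA hfB hfne using cov2
  -- encoding function
  set enc : Finset (Finset (V ℓ)) × Bool → 
      Finset (V ℓ) × Finset (Finset (V ℓ)) × Finset (Finset (V ℓ)) ×
        Finset (Finset (V ℓ) × Finset (V ℓ)) := fun Pb =>
    if h : Pb.1 ∈ PF then
      (let A := if Pb.2 then (fAB Pb.1 h).2 else (fAB Pb.1 h).1;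
        (A, restrict Pb.1 A, restrict Pb.1 (S \ A), sigmaOf Pb.1 A (S \ A)))
    else (∅, ∅, ∅, ∅) with henc
  set Dom : Finset (Finset (Finset (V ℓ)) × Bool) :=
    PF ×ˢ (if Tl = Tr then {false, true} else {false}) with hDom
  have hDomcard : Dom.card = 2 ^ (if Tl = Tr then 1 else 0) * PF.card := by
    rw [hDom, Finset.card_product]
    by_cases hTT : Tl = Tr <;> simp [hTT, Nat.mul_comm]
  -- injectivity
  have hinj : Set.InjOn enc ↑Dom := by
    rintro ⟨P, b⟩ hPb ⟨P', b'⟩ hPb' heq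
    have hP : P ∈ PF := (Finset.mem_product.1 (Finset.mem_coe.1 hPb)).1
    have hP' : P' ∈ PF := (Finset.mem_product.1 (Finset.mem_coe.1 hPb')).1
    rw [henc] at heq
    simp only [dif_pos hP, dif_pos hP'] at heq
    set A := if b then (fAB P hP).2 else (fAB P hP).1 with hA
    set A' := if b' then (fAB P' hP').2 else (fAB P' hP').1 with hA'
    have h1 : A = A' := congrArg Prod.fst heq
    have h2 : restrict P A = restrict P' A' := congrArg (fun z => z.2.1) heq
    have h3 : restrict P (S \ A) = restrict P' (S \ A') := congrArg (fun z => z.2.2.1) heq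
    have h4 : sigmaOf P A (S \ A) = sigmaOf P' A' (S \ A') := congrArg (fun z => z.2.2.2) heq
    have hPart := (mem_RPF.1 hP).1
    have hPart' := (mem_RPF.1 hP').1
    have hPP' : P = P' := by
      rw [← recon_eq hPart (A := A), ← recon_eq hPart' (A := A'), h2, h3, h4]
    subst hPP'
    have hbb' : b = b' := by
      by_contra hne
      have hTT : Tl = Tr := by
        by_contra hTT
        have hsub := (Finset.mem_product.1 (Finset.mem_coe.1 hPb)).2
        have hsub' := (Finset.mem_product.1 (Finset.mem_coe.1 hPb')).2
        rw [if_neg hTT] at hsub hsub'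
        have hb : b = false := Finset.mem_singleton.1 hsub
        have hb' : b' = false := Finset.mem_singleton.1 hsub'
        rw [hb, hb'] at hne
        exact hne rfl
      have := hfne P hP hTT
      cases b <;> cases b' <;> simp_all [hA, hA']
    rw [hbb']
  -- the target finset
  set grid := (Finset.Icc 1 c ×ˢ Finset.Icc 1 c).filter (fun ab => c ≤ ab.1 + ab.2) with hgrid
  set 𝒯 : Finset (Finset (V ℓ) × Finset (Finset (V ℓ)) × Finset (Finset (V ℓ)) ×
      Finset (Finset (V ℓ) × Finset (V ℓ))) :=
    (Finset.Icc Tl.leaves (m - Tr.leaves)).biUnion (fun k =>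
      ((Finset.univ : Finset (Fin ℓ × Bool)).image
          (fun z => tops (keyof z.1 z.2) k S)).biUnion (fun A =>
        grid.biUnion (fun ab =>
          ((RPF ℓ Tl ab.1 A) ×ˢ (RPF ℓ Tr ab.2 (S \ A))).biUnion (fun P12 =>
            {A} ×ˢ {P12.1} ×ˢ {P12.2} ×ˢ matchings P12.1 P12.2 (ab.1 + ab.2 - c))))) with h𝒯
  -- mapsTo
  have hmaps : ∀ Pb ∈ Dom, enc Pb ∈ 𝒯 := by
    rintro ⟨P, b⟩ hPb
    have hP : P ∈ PF := (Finset.mem_product.1 hPb).1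
    have hPart := (mem_RPF.1 hP).1
    rw [henc]
    simp only [dif_pos hP]
    have hcov : covProp P (if b then (fAB P hP).2 else (fAB P hP).1) := by
      cases b
      · simpa using hfA P hP
      · simpa using hfB P hP
    set A := if b then (fAB P hP).2 else (fAB P hP).1 with hA
    obtain ⟨⟨i', s', htops⟩, hIcc, hrealL, hrealR⟩ := hcov
    set k := A.card with hk
    have hAS : A ⊆ S := by rw [htops]; exact tops_subset _ _ _
    have hkm : k ≤ m := hS ▸ Finset.card_le_card hAS
    have hAne : A.Nonempty := by
      rw [← Finset.card_pos, ← hk]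
      have := (Finset.mem_Icc.1 hIcc).1
      omega
    have hcompl : (S \ A).card = m - k := by rw [Finset.card_sdiff_of_subset hAS, hS]
    have hcomplne : (S \ A).Nonempty := by
      rw [← Finset.card_pos, hcompl]
      have := (Finset.mem_Icc.1 hIcc).2
      omega
    set a := (restrict P A).card with ha
    set b2 := (restrict P (S \ A)).card with hb2
    have hcards := card_partition_split hPart A
    rw [hPart.1] at hcards
    have h1a : 1 ≤ a := card_restrict_pos hPart hAS hAne
    have h1b : 1 ≤ b2 := card_restrict_pos hPart Finset.sdiff_subset hcomplne
    have hac : a ≤ c := by rw [ha, ← hPart.1]; exact card_restrict_le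
    have hbc : b2 ≤ c := by rw [hb2, ← hPart.1]; exact card_restrict_le
    have hcab : c ≤ a + b2 := by omega
    refine Finset.mem_biUnion.2 ⟨k, hIcc, ?_⟩
    refine Finset.mem_biUnion.2 ⟨A, ?_, ?_⟩
    · exact Finset.mem_image.2 ⟨(i', s'), Finset.mem_univ _, htops.symm⟩
    refine Finset.mem_biUnion.2 ⟨(a, b2), ?_, ?_⟩
    · rw [hgrid]
      refine Finset.mem_filter.2 ⟨Finset.mem_product.2 ⟨?_, ?_⟩, hcab⟩
      · exact Finset.mem_Icc.2 ⟨h1a, hac⟩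
      · exact Finset.mem_Icc.2 ⟨h1b, hbc⟩
    refine Finset.mem_biUnion.2 ⟨(restrict P A, restrict P (S \ A)), ?_, ?_⟩
    · refine Finset.mem_product.2 ⟨?_, ?_⟩
      · exact mem_RPF.2 ⟨isPartition_restrict hPart hAS, hrealL⟩
      · exact mem_RPF.2 ⟨isPartition_restrict hPart Finset.sdiff_subset, hrealR⟩
    · refine Finset.mem_product.2 ⟨Finset.mem_singleton.2 rfl, ?_⟩
      refine Finset.mem_product.2 ⟨Finset.mem_singleton.2 rfl, ?_⟩
      refine Finset.mem_product.2 ⟨Finset.mem_singleton.2 rfl, ?_⟩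
      refine Finset.mem_filter.2 ⟨?_, ?_, ?_, ?_⟩
      · -- subset of product
        refine Finset.mem_powerset.2 ?_
        rintro z hz
        rcases Finset.mem_image.1 (Finset.mem_filter.1 hz).1 with ⟨p, hp, rfl⟩
        have hne1 := (Finset.mem_filter.1 hz).2.1
        have hne2 := (Finset.mem_filter.1 hz).2.2
        refine Finset.mem_product.2 ⟨?_, ?_⟩
        · exact mem_restrict.2 ⟨⟨p, hp, rfl⟩, hne1⟩
        · exact mem_restrict.2 ⟨⟨p, hp, rfl⟩, hne2⟩
      · show (sigmaOf P A (S \ A)).card = (a, b2).1 + (a, b2).2 - c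
        have hgoal : (sigmaOf P A (S \ A)).card = a + b2 - c := by omega
        simpa using hgoal
      · -- fst injective
        rintro z hz w hw hzw
        rcases Finset.mem_image.1 (Finset.mem_filter.1 hz).1 with ⟨p, hp, rfl⟩
        rcases Finset.mem_image.1 (Finset.mem_filter.1 hw).1 with ⟨p', hp', rfl⟩
        have hne1 : (p ∩ A).Nonempty := (Finset.mem_filter.1 hz).2.1
        have hzw' : p ∩ A = p' ∩ A := hzw
        rw [restrict_inter_inj hPart hp hp' hzw' hne1]
      · -- snd injective
        rintro z hz w hw hzw
        rcases Finset.mem_image.1 (Finset.mem_filter.1 hz).1 with ⟨p, hp, rfl⟩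
        rcases Finset.mem_image.1 (Finset.mem_filter.1 hw).1 with ⟨p', hp', rfl⟩
        have hne1 : (p ∩ (S \ A)).Nonempty := (Finset.mem_filter.1 hz).2.2
        have hzw' : p ∩ (S \ A) = p' ∩ (S \ A) := hzw
        rw [restrict_inter_inj hPart hp hp' hzw' hne1]
  -- cardinality chain
  have hcard1 : Dom.card ≤ 𝒯.card := Finset.card_le_card_of_injOn enc hmaps hinj
  -- bound 𝒯
  have hTbound : 𝒯.card ≤
      ∑ k ∈ Finset.Icc Tl.leaves (m - Tr.leaves),
        min (2 * ℓ) (m.choose k) *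
          ∑ p ∈ grid,
            p.1.choose (c - p.2) * p.2.choose (c - p.1) * (p.1 + p.2 - c).factorial *
              treePi ℓ Tl p.1 k * treePi ℓ Tr p.2 (m - k) := by
    rw [h𝒯]
    refine le_trans Finset.card_biUnion_le (Finset.sum_le_sum ?_)
    intro k hkIcc
    have hkm : k ≤ m := by
      have := (Finset.mem_Icc.1 hkIcc).2
      omega
    set 𝒜 := (Finset.univ : Finset (Fin ℓ × Bool)).image (fun z => tops (keyof z.1 z.2) k S)
      with h𝒜
    have h𝒜le : 𝒜.card ≤ min (2 * ℓ) (m.choose k) := by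
      refine le_min ?_ ?_
      · refine le_trans Finset.card_image_le ?_
        simp [Finset.card_univ]
        omega
      · have hsub : 𝒜 ⊆ S.powersetCard k := by
          intro A hA
          rcases Finset.mem_image.1 hA with ⟨z, _, rfl⟩
          refine Finset.mem_powersetCard.2 ⟨tops_subset _ _ _, ?_⟩
          rw [tops_card, hS]
          omega
        have := Finset.card_le_card hsub
        rwa [Finset.card_powersetCard, hS] at this
    refine le_trans Finset.card_biUnion_le ?_
    have hAbound : ∀ A ∈ 𝒜,
        (grid.biUnion (fun ab =>
          ((RPF ℓ Tl ab.1 A) ×ˢ (RPF ℓ Tr ab.2 (S \ A))).biUnion (fun P12 =>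
            {A} ×ˢ {P12.1} ×ˢ {P12.2} ×ˢ matchings P12.1 P12.2 (ab.1 + ab.2 - c)))).card ≤
          ∑ p ∈ grid,
            p.1.choose (c - p.2) * p.2.choose (c - p.1) * (p.1 + p.2 - c).factorial *
              treePi ℓ Tl p.1 k * treePi ℓ Tr p.2 (m - k) := by
      intro A hA𝒜
      have hAcard : A.card = k := by
        rcases Finset.mem_image.1 hA𝒜 with ⟨z, _, rfl⟩
        rw [tops_card, hS]
        omega
      have hAS : A ⊆ S := by
        rcases Finset.mem_image.1 hA𝒜 with ⟨z, _, rfl⟩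
        exact tops_subset _ _ _
      have hcompl : (S \ A).card = m - k := by rw [Finset.card_sdiff_of_subset hAS, hS, hAcard]
      refine le_trans Finset.card_biUnion_le (Finset.sum_le_sum ?_)
      intro ab habgrid
      obtain ⟨habmem, hab⟩ := Finset.mem_filter.1 habgrid
      obtain ⟨hamem, hbmem⟩ := Finset.mem_product.1 habmem
      have ha1 := (Finset.mem_Icc.1 hamem).1
      have hac := (Finset.mem_Icc.1 hamem).2
      have hb1 := (Finset.mem_Icc.1 hbmem).1
      have hbc := (Finset.mem_Icc.1 hbmem).2
      refine le_trans Finset.card_biUnion_le ?_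
      have hper : ∀ P12 ∈ (RPF ℓ Tl ab.1 A) ×ˢ (RPF ℓ Tr ab.2 (S \ A)),
          ({A} ×ˢ {P12.1} ×ˢ {P12.2} ×ˢ matchings P12.1 P12.2 (ab.1 + ab.2 - c)).card ≤
            ab.1.choose (c - ab.2) * (ab.2.choose (c - ab.1) * (ab.1 + ab.2 - c).factorial) := by
        rintro ⟨P1, P2⟩ hP12
        obtain ⟨hP1, hP2⟩ := Finset.mem_product.1 hP12
        have hP1card : P1.card = ab.1 := (mem_RPF.1 hP1).1.1
        have hP2card : P2.card = ab.2 := (mem_RPF.1 hP2).1.1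
        have hcardeq : ({A} ×ˢ {P1} ×ˢ {P2} ×ˢ matchings P1 P2 (ab.1 + ab.2 - c)).card =
            (matchings P1 P2 (ab.1 + ab.2 - c)).card := by
          rw [Finset.card_product, Finset.card_product, Finset.card_product]
          simp
        rw [hcardeq]
        have hmatch := card_matchings P1 P2 (ab.1 + ab.2 - c)
        rw [hP1card, hP2card] at hmatch
        have he1 : ab.1.choose (ab.1 + ab.2 - c) = ab.1.choose (c - ab.2) := by
          have : c - ab.2 = ab.1 - (ab.1 + ab.2 - c) := by omega
          rw [this, Nat.choose_symm (by omega)]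
        have he2 : ab.2.choose (ab.1 + ab.2 - c) = ab.2.choose (c - ab.1) := by
          have : c - ab.1 = ab.2 - (ab.1 + ab.2 - c) := by omega
          rw [this, Nat.choose_symm (by omega)]
        rw [he1, he2] at hmatch
        exact hmatch
      refine le_trans (Finset.sum_le_sum hper) ?_
      rw [Finset.sum_const, Finset.card_product, smul_eq_mul]
      have hπ1 : (RPF ℓ Tl ab.1 A).card ≤ treePi ℓ Tl ab.1 k := by
        have := card_RPF_le_treePi (ℓ := ℓ) Tl ab.1 A
        rwa [hAcard] at this
      have hπ2 : (RPF ℓ Tr ab.2 (S \ A)).card ≤ treePi ℓ Tr ab.2 (m - k) := by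
        have := card_RPF_le_treePi (ℓ := ℓ) Tr ab.2 (S \ A)
        rwa [hcompl] at this
      calc (RPF ℓ Tl ab.1 A).card * (RPF ℓ Tr ab.2 (S \ A)).card *
            (ab.1.choose (c - ab.2) * (ab.2.choose (c - ab.1) * (ab.1 + ab.2 - c).factorial))
          ≤ treePi ℓ Tl ab.1 k * treePi ℓ Tr ab.2 (m - k) *
            (ab.1.choose (c - ab.2) * (ab.2.choose (c - ab.1) * (ab.1 + ab.2 - c).factorial)) :=
            Nat.mul_le_mul_right _ (Nat.mul_le_mul hπ1 hπ2)
        _ = ab.1.choose (c - ab.2) * ab.2.choose (c - ab.1) * (ab.1 + ab.2 - c).factorial *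
              treePi ℓ Tl ab.1 k * treePi ℓ Tr ab.2 (m - k) := by ring
    refine le_trans (Finset.sum_le_sum hAbound) ?_
    rw [Finset.sum_const, smul_eq_mul]
    exact Nat.mul_le_mul_right _ h𝒜le
  rw [hncard, ← hDomcard]
  exact le_trans hcard1 (le_trans hTbound (by rw [hgrid]))

end Main


lemma exists_sample (hℓ : 1 ≤ ℓ) (m : ℕ) : ∃ S : Finset (V ℓ), S.card = m := by
  set f : ℕ → V ℓ := fun n _ => (n : ℝ) with hf
  have hinj : Function.Injective f := by
    intro n n' h
    have h2 : ((n : ℝ)) = (n' : ℝ) := congrFun h ⟨0, hℓ⟩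
    exact_mod_cast h2
  exact ⟨(Finset.range m).image f,
    by rw [Finset.card_image_of_injective _ hinj, Finset.card_range]⟩

end TreeAux

theorem tree_partitioning_recursive_upper_bound
    (ℓ : ℕ) (hℓ : 1 ≤ ℓ) (Tl Tr : TreeStruct) (c m : ℕ) (hc : 1 ≤ c)
    (hm : (TreeStruct.node Tl Tr).leaves < m) :
    ((2 : ℕ) ^ (if Tl = Tr then 1 else 0)) * treePi ℓ (TreeStruct.node Tl Tr) c m ≤
      ∑ k ∈ Finset.Icc Tl.leaves (m - Tr.leaves),
        min (2 * ℓ) (m.choose k) *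
          ∑ p ∈ (Finset.Icc 1 c ×ˢ Finset.Icc 1 c).filter (fun p => c ≤ p.1 + p.2),
            p.1.choose (c - p.2) * p.2.choose (c - p.1) * (p.1 + p.2 - c).factorial *
              treePi ℓ Tl p.1 k * treePi ℓ Tr p.2 (m - k) := by
  classical
  obtain ⟨S0, hS0⟩ := TreeAux.exists_sample hℓ m
  have hne : {n : ℕ | ∃ S : Finset (Fin ℓ → ℝ), S.card = m ∧
      n = (PartSet ℓ (TreeStruct.node Tl Tr) c S).ncard}.Nonempty :=
    ⟨_, S0, hS0, rfl⟩
  have hbdd := TreeAux.treePi_bddAbove (ℓ := ℓ) (TreeStruct.node Tl Tr) c m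
  have hmem := Nat.sSup_mem hne hbdd
  obtain ⟨S, hScard, hSn⟩ := hmem
  obtain ⟨S', hcard', hgen, hle⟩ := TreeAux.exists_generic hℓ (TreeStruct.node Tl Tr) c S
  have hmain := TreeAux.main_generic hℓ Tl Tr c m hc hm S' (hcard'.trans hScard) hgen
  have hfin : treePi ℓ (TreeStruct.node Tl Tr) c m =
      (PartSet ℓ (TreeStruct.node Tl Tr) c S).ncard := hSn
  rw [hfin]
  refine le_trans ?_ hmain
  exact Nat.mul_le_mul_left _ hle
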